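/- arXiv:1207.6381 — 6 statements merged into one kernel-verified Lean document; each statement's English description precedes it below -/
import Mathlib

section
/- A feasible flow x of the minimum-cost flow problem is optimal if and only if the residual network G_x contains no directed cycle of negative total cost. -/
open Finset

variable {V A : Type}

/-- Excess of node `i` with respect to pseudoflow `x` and supplies `b`. -/
def excess [Fintype A] [DecidableEq V] (src tgt : A → V) (b : V → ℤ)
    (x : A → ℤ) (i : V) : ℤ :=
  b i + ∑ a ∈ Finset.univ.filter (fun a => tgt a = i), x a
      - ∑ a ∈ Finset.univ.filter (fun a => src a = i), x a

/-- A pseudoflow obeys the nonnegativity and capacity constraints. -/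
def IsPseudoflow (cap x : A → ℤ) : Prop := ∀ a, 0 ≤ x a ∧ x a ≤ cap a

/-- A feasible flow: pseudoflow satisfying the conservation constraints. -/
def IsFeasible [Fintype A] [DecidableEq V] (src tgt : A → V) (b : V → ℤ)
    (cap x : A → ℤ) : Prop :=
  IsPseudoflow cap x ∧ ∀ i, excess src tgt b x i = 0

/-- Total cost of a flow. -/
def flowCost [Fintype A] (c x : A → ℤ) : ℤ := ∑ a, c a * x a

/-- An optimal solution of the minimum-cost flow problem. -/
def IsOptimal [Fintype A] [DecidableEq V] (src tgt : A → V) (b : V → ℤ)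
    (cap c x : A → ℤ) : Prop :=
  IsFeasible src tgt b cap x ∧
    ∀ y, IsFeasible src tgt b cap y → flowCost c x ≤ flowCost c y

/-- Source of a residual arc: `(a, true)` is the forward copy of `a`,
`(a, false)` the backward copy. -/
def rsrc (src tgt : A → V) (p : A × Bool) : V := if p.2 then src p.1 else tgt p.1

/-- Target of a residual arc. -/
def rtgt (src tgt : A → V) (p : A × Bool) : V := if p.2 then tgt p.1 else src p.1

/-- Cost of a residual arc. -/
def rcost (c : A → ℤ) (p : A × Bool) : ℤ := if p.2 then c p.1 else -c p.1

/-- Whether a (forward/backward) arc is present in the residual network of `x`. -/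
def IsResidual (cap x : A → ℤ) (p : A × Bool) : Prop :=
  if p.2 then x p.1 < cap p.1 else 0 < x p.1

/-- Reduced cost of a residual arc with respect to potentials `π`. -/
def redcost (src tgt : A → V) (c : A → ℤ) (π : V → ℝ) (p : A × Bool) : ℝ :=
  (rcost c p : ℝ) + π (rsrc src tgt p) - π (rtgt src tgt p)

/-- A directed cycle (closed directed walk), given by `k > 0` arcs in cyclic order. -/
def IsCycle {E : Type} (s t : E → V) {k : ℕ} (hk : 0 < k) (cyc : Fin k → E) : Prop :=
  ∀ i : Fin k, t (cyc i) = s (cyc ⟨(i.1 + 1) % k, Nat.mod_lt _ hk⟩)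

/-- Underlying undirected (simple) graph of the arcs in `T`. -/
def underlying (src tgt : A → V) (T : Finset A) : SimpleGraph V where
  Adj i j := i ≠ j ∧ ∃ a ∈ T, (src a = i ∧ tgt a = j) ∨ (src a = j ∧ tgt a = i)
  symm := by
    constructor
    rintro i j ⟨hij, a, haT, h⟩
    exact ⟨hij.symm, a, haT, h.symm⟩
  loopless := by constructor; rintro i ⟨h, -⟩; exact h rfl

/-- Total excess of the excess nodes. -/
def totalExcess [Fintype V] [Fintype A] [DecidableEq V]
    (src tgt : A → V) (b : V → ℤ) (x : A → ℤ) : ℤ :=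
  ∑ i ∈ Finset.univ.filter (fun i => 0 < excess src tgt b x i), excess src tgt b x i

section AuxLemmas

variable {V A : Type}

open Classical in
/-- Net change on arc `a` induced by pushing one unit around the walk `cyc`. -/
noncomputable def walkDelta [Fintype A] {k : ℕ} (cyc : Fin k → A × Bool) (a : A) : ℤ :=
  ∑ n, (if a = (cyc n).1 then (if (cyc n).2 then (1:ℤ) else -1) else 0)

lemma walkDelta_cost [Fintype A] (c : A → ℤ) {k : ℕ} (cyc : Fin k → A × Bool) :
    ∑ a, c a * walkDelta cyc a = ∑ n, rcost c (cyc n) := by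
  classical
  unfold walkDelta
  simp_rw [Finset.mul_sum]
  rw [Finset.sum_comm]
  refine Finset.sum_congr rfl fun n _ => ?_
  have h : ∀ a : A, (c a * if a = (cyc n).1 then (if (cyc n).2 then (1:ℤ) else -1) else 0)
      = (if a = (cyc n).1 then (if (cyc n).2 then c a else -c a) else 0) := by
    intro a; split_ifs <;> ring
  simp_rw [h]
  rw [Finset.sum_ite_eq' Finset.univ ((cyc n).1) (fun a => if (cyc n).2 then c a else -c a)]
  simp [rcost]

lemma walkDelta_filter_sum [Fintype A] [DecidableEq V] (f : A → V) {k : ℕ}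
    (cyc : Fin k → A × Bool) (i : V) :
    ∑ a ∈ Finset.univ.filter (fun a => f a = i), walkDelta cyc a
      = ∑ n, (if f (cyc n).1 = i then (if (cyc n).2 then (1:ℤ) else -1) else 0) := by
  classical
  unfold walkDelta
  rw [Finset.sum_comm]
  refine Finset.sum_congr rfl fun n _ => ?_
  rw [Finset.sum_ite_eq' (Finset.univ.filter (fun a => f a = i)) ((cyc n).1)
      (fun _ => (if (cyc n).2 then (1:ℤ) else -1))]
  simp [Finset.mem_filter]

end AuxLemmas
section AuxLemmas2

variable {V A : Type}

lemma succMod_bij {k : ℕ} (hk : 0 < k) :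
    Function.Bijective (fun n : Fin k => (⟨(n.1 + 1) % k, Nat.mod_lt _ hk⟩ : Fin k)) := by
  rw [Fintype.bijective_iff_injective_and_card]
  refine ⟨fun a b h => ?_, rfl⟩
  simp only [Fin.mk.injEq] at h
  have ha := a.isLt; have hb := b.isLt
  apply Fin.ext
  by_cases h1 : a.1 + 1 < k <;> by_cases h2 : b.1 + 1 < k
  · rwa [Nat.mod_eq_of_lt h1, Nat.mod_eq_of_lt h2, Nat.add_right_cancel_iff] at h
  · have : b.1 + 1 = k := by omega
    rw [Nat.mod_eq_of_lt h1, this, Nat.mod_self] at h; omega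
  · have : a.1 + 1 = k := by omega
    rw [Nat.mod_eq_of_lt h2, this, Nat.mod_self] at h; omega
  · omega

lemma walkDelta_div [Fintype A] [DecidableEq V] (src tgt : A → V) {k : ℕ} (hk : 0 < k)
    (cyc : Fin k → A × Bool) (hcyc : IsCycle (rsrc src tgt) (rtgt src tgt) hk cyc) (i : V) :
    ∑ a ∈ Finset.univ.filter (fun a => src a = i), walkDelta cyc a
      = ∑ a ∈ Finset.univ.filter (fun a => tgt a = i), walkDelta cyc a := by
  classical
  rw [walkDelta_filter_sum, walkDelta_filter_sum]
  have key : ∀ n : Fin k,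
      (if src (cyc n).1 = i then (if (cyc n).2 then (1:ℤ) else -1) else 0)
        - (if tgt (cyc n).1 = i then (if (cyc n).2 then (1:ℤ) else -1) else 0)
      = (if rsrc src tgt (cyc n) = i then (1:ℤ) else 0)
        - (if rtgt src tgt (cyc n) = i then (1:ℤ) else 0) := by
    intro n
    rcases hb : (cyc n).2 <;> simp only [rsrc, rtgt, hb, if_true, if_false, Bool.false_eq_true] <;>
      split_ifs <;> ring
  have hrot : ∑ n : Fin k, (if rtgt src tgt (cyc n) = i then (1:ℤ) else 0)
      = ∑ n : Fin k, (if rsrc src tgt (cyc n) = i then (1:ℤ) else 0) := by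
    have h1 : ∀ n : Fin k, (if rtgt src tgt (cyc n) = i then (1:ℤ) else 0)
        = (if rsrc src tgt (cyc ⟨(n.1 + 1) % k, Nat.mod_lt _ hk⟩) = i then (1:ℤ) else 0) := by
      intro n; rw [hcyc n]
    rw [Finset.sum_congr rfl (fun n _ => h1 n)]
    exact (succMod_bij hk).sum_comp (fun m => if rsrc src tgt (cyc m) = i then (1:ℤ) else 0)
  have := Finset.sum_congr rfl (fun n (_ : n ∈ (Finset.univ : Finset (Fin k))) => key n)
  rw [Finset.sum_sub_distrib, Finset.sum_sub_distrib, hrot] at this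
  omega

lemma walkDelta_pos [Fintype A] {k : ℕ} (cyc : Fin k → A × Bool) (a : A)
    (h : 0 < walkDelta cyc a) : ∃ n, cyc n = (a, true) := by
  classical
  by_contra hc
  push_neg at hc
  have : walkDelta cyc a ≤ 0 := by
    refine Finset.sum_nonpos fun n _ => ?_
    by_cases h1 : a = (cyc n).1
    · rcases hb : (cyc n).2
      · simp [h1, hb]
      · exact absurd (Prod.ext h1.symm hb) (hc n)
    · simp [h1]
  omega

lemma walkDelta_neg [Fintype A] {k : ℕ} (cyc : Fin k → A × Bool) (a : A)
    (h : walkDelta cyc a < 0) : ∃ n, cyc n = (a, false) := by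
  classical
  by_contra hc
  push_neg at hc
  have : 0 ≤ walkDelta cyc a := by
    refine Finset.sum_nonneg fun n _ => ?_
    by_cases h1 : a = (cyc n).1
    · rcases hb : (cyc n).2
      · exact absurd (Prod.ext h1.symm hb) (hc n)
      · simp [h1, hb]
    · simp [h1]
  omega

lemma walkDelta_cases [Fintype A] {k : ℕ} {cyc : Fin k → A × Bool}
    (hinj : Function.Injective cyc) (a : A) :
    (walkDelta cyc a = 0 ∧ ((∀ n, (cyc n).1 ≠ a) ∨ ((∃ n, cyc n = (a, true)) ∧ (∃ n, cyc n = (a, false)))))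
    ∨ (walkDelta cyc a = 1 ∧ (∃ n, cyc n = (a, true)))
    ∨ (walkDelta cyc a = -1 ∧ (∃ n, cyc n = (a, false))) := by
  classical
  have hterm : ∀ n : Fin k, (if a = (cyc n).1 then (if (cyc n).2 then (1:ℤ) else -1) else 0)
      = (if cyc n = (a, true) then (1:ℤ) else 0) - (if cyc n = (a, false) then (1:ℤ) else 0) := by
    intro n
    rcases e : cyc n with ⟨a', b'⟩
    rcases b' <;> by_cases h : a = a' <;> simp [h, Prod.ext_iff, eq_comm]
  have hδ : walkDelta cyc a
      = ∑ n : Fin k, (if cyc n = (a, true) then (1:ℤ) else 0)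
        - ∑ n : Fin k, (if cyc n = (a, false) then (1:ℤ) else 0) := by
    unfold walkDelta
    rw [Finset.sum_congr rfl (fun n _ => hterm n), Finset.sum_sub_distrib]
  rw [Finset.sum_boole, Finset.sum_boole] at hδ
  set T := Finset.univ.filter (fun n => cyc n = (a, true)) with hTdef
  set F := Finset.univ.filter (fun n => cyc n = (a, false)) with hFdef
  have hT1 : T.card ≤ 1 := Finset.card_le_one.mpr fun m hm n hn => hinj (by
    rw [hTdef, Finset.mem_filter] at hm hn; rw [hm.2, hn.2])
  have hF1 : F.card ≤ 1 := Finset.card_le_one.mpr fun m hm n hn => hinj (by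
    rw [hFdef, Finset.mem_filter] at hm hn; rw [hm.2, hn.2])
  have hTex : T.card = 1 → ∃ n, cyc n = (a, true) := by
    intro h
    obtain ⟨n, hn⟩ := Finset.card_pos.mp (show 0 < T.card by omega)
    exact ⟨n, (Finset.mem_filter.mp hn).2⟩
  have hFex : F.card = 1 → ∃ n, cyc n = (a, false) := by
    intro h
    obtain ⟨n, hn⟩ := Finset.card_pos.mp (show 0 < F.card by omega)
    exact ⟨n, (Finset.mem_filter.mp hn).2⟩
  have hT0 : T.card = 0 → ∀ n, cyc n ≠ (a, true) := by
    intro h n hn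
    have hm : n ∈ T := Finset.mem_filter.mpr ⟨Finset.mem_univ n, hn⟩
    rw [Finset.card_eq_zero.mp h] at hm
    exact absurd hm (Finset.notMem_empty n)
  have hF0 : F.card = 0 → ∀ n, cyc n ≠ (a, false) := by
    intro h n hn
    have hm : n ∈ F := Finset.mem_filter.mpr ⟨Finset.mem_univ n, hn⟩
    rw [Finset.card_eq_zero.mp h] at hm
    exact absurd hm (Finset.notMem_empty n)
  have hTc : T.card = 0 ∨ T.card = 1 := by omega
  have hFc : F.card = 0 ∨ F.card = 1 := by omega
  rcases hTc with hT | hT <;> rcases hFc with hF | hF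
  · refine Or.inl ⟨by rw [hδ, hT, hF]; ring, Or.inl fun n hn => ?_⟩
    rcases hb : (cyc n).2
    · exact hF0 hF n (Prod.ext hn hb)
    · exact hT0 hT n (Prod.ext hn hb)
  · exact Or.inr (Or.inr ⟨by rw [hδ, hT, hF]; ring, hFex hF⟩)
  · exact Or.inr (Or.inl ⟨by rw [hδ, hT, hF]; ring, hTex hT⟩)
  · exact Or.inl ⟨by rw [hδ, hT, hF]; ring, Or.inr ⟨hTex hT, hFex hF⟩⟩

end AuxLemmas2
section Extract

variable {V A : Type}

lemma extract_step [Fintype V] [Fintype A] [DecidableEq V]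
    (src tgt : A → V) (cap c x : A → ℤ) (g : A → ℤ)
    (hcons : ∀ i : V, ∑ a ∈ Finset.univ.filter (fun a => src a = i), g a
        = ∑ a ∈ Finset.univ.filter (fun a => tgt a = i), g a)
    (hpos : ∀ a, 0 < g a → x a < cap a) (hneg : ∀ a, g a < 0 → 0 < x a)
    (a0 : A) (ha0 : g a0 ≠ 0) :
    ∃ (k : ℕ) (hk : 0 < k) (cyc : Fin k → A × Bool),
      Function.Injective cyc ∧ (∀ n, IsResidual cap x (cyc n)) ∧
      IsCycle (rsrc src tgt) (rtgt src tgt) hk cyc ∧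
      (∀ i : V, ∑ a ∈ Finset.univ.filter (fun a => src a = i), (g a - walkDelta cyc a)
          = ∑ a ∈ Finset.univ.filter (fun a => tgt a = i), (g a - walkDelta cyc a)) ∧
      (∀ a, 0 < g a - walkDelta cyc a → x a < cap a) ∧
      (∀ a, g a - walkDelta cyc a < 0 → 0 < x a) ∧
      (∑ a, (g a - walkDelta cyc a).natAbs < ∑ a, (g a).natAbs) ∧
      (∑ a, c a * g a = (∑ n, rcost c (cyc n)) + ∑ a, c a * (g a - walkDelta cyc a)) := by
  classical
  set Supp : A × Bool → Prop := fun p => if p.2 then 0 < g p.1 else g p.1 < 0 with hSupp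
  have hstep : ∀ p, Supp p → ∃ q, Supp q ∧ rsrc src tgt q = rtgt src tgt p := by
    intro p hp
    by_contra hc
    push_neg at hc
    have hsrc : ∀ a, src a = rtgt src tgt p → g a ≤ 0 := by
      intro a ha
      by_contra h
      push_neg at h
      exact hc (a, true) (by simpa [hSupp] using h) (by simpa [rsrc] using ha)
    have htgt : ∀ a, tgt a = rtgt src tgt p → 0 ≤ g a := by
      intro a ha
      by_contra h
      push_neg at h
      exact hc (a, false) (by simpa [hSupp] using h) (by simpa [rsrc] using ha)
    have h1 : ∑ a ∈ Finset.univ.filter (fun a => src a = rtgt src tgt p), g a ≤ 0 :=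
      Finset.sum_nonpos fun a ha => hsrc a (Finset.mem_filter.mp ha).2
    have h2 : 0 ≤ ∑ a ∈ Finset.univ.filter (fun a => tgt a = rtgt src tgt p), g a :=
      Finset.sum_nonneg fun a ha => htgt a (Finset.mem_filter.mp ha).2
    have heq := hcons (rtgt src tgt p)
    have hz2 : ∀ a ∈ Finset.univ.filter (fun a => tgt a = rtgt src tgt p), g a = 0 :=
      (Finset.sum_eq_zero_iff_of_nonneg
        (fun a ha => htgt a (Finset.mem_filter.mp ha).2)).mp (by omega)
    have hz1 : ∀ a ∈ Finset.univ.filter (fun a => src a = rtgt src tgt p), g a = 0 :=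
      (Finset.sum_eq_zero_iff_of_nonpos
        (fun a ha => hsrc a (Finset.mem_filter.mp ha).2)).mp (by omega)
    rcases hb : p.2
    · have hps : g p.1 < 0 := by
        have := hp; rw [hSupp] at this; simpa [hb] using this
      have : g p.1 = 0 := hz1 p.1 (Finset.mem_filter.mpr ⟨Finset.mem_univ _, by simp [rtgt, hb]⟩)
      omega
    · have hps : 0 < g p.1 := by
        have := hp; rw [hSupp] at this; simpa [hb] using this
      have : g p.1 = 0 := hz2 p.1 (Finset.mem_filter.mpr ⟨Finset.mem_univ _, by simp [rtgt, hb]⟩)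
      omega
  choose! nxt hnxt using hstep
  set p0 : A × Bool := if 0 < g a0 then (a0, true) else (a0, false) with hp0def
  have hp0 : Supp p0 := by
    by_cases h : 0 < g a0 <;> simp [hp0def, hSupp, h] <;> omega
  set f : ℕ → A × Bool := fun n => nxt^[n] p0 with hfdef
  have hfsucc : ∀ n, f (n + 1) = nxt (f n) := by
    intro n; rw [hfdef]; simp [Function.iterate_succ_apply']
  have hfS : ∀ n, Supp (f n) := by
    intro n
    induction n with
    | zero => exact hp0
    | succ m ihm => rw [hfsucc]; exact (hnxt _ ihm).1
  have hfc : ∀ n, rsrc src tgt (f (n + 1)) = rtgt src tgt (f n) := by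
    intro n; rw [hfsucc]; exact (hnxt _ (hfS n)).2
  have hex : ∃ d, 0 < d ∧ ∃ i, f (i + d) = f i := by
    obtain ⟨s, t, hst, he⟩ := Finite.exists_ne_map_eq_of_infinite f
    rcases Nat.lt_or_ge s t with h | h
    · exact ⟨t - s, by omega, s, by rw [show s + (t - s) = t by omega]; exact he.symm⟩
    · exact ⟨s - t, by omega, t, by rw [show t + (s - t) = s by omega]; exact he⟩
  have hd : 0 < Nat.find hex := (Nat.find_spec hex).1
  obtain ⟨i0, hfi⟩ := (Nat.find_spec hex).2
  set d := Nat.find hex with hddef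
  set cyc : Fin d → A × Bool := fun n => f (i0 + n.1) with hcycdef
  have hinj : Function.Injective cyc := by
    have key : ∀ s t : Fin d, s.1 < t.1 → cyc s = cyc t → False := by
      intro s t hlt hh
      have hex2 : ∃ i, f (i + (t.1 - s.1)) = f i := ⟨i0 + s.1, by
        rw [show i0 + s.1 + (t.1 - s.1) = i0 + t.1 by omega]
        rw [hcycdef] at hh
        exact hh.symm⟩
      have ht := t.2
      exact Nat.find_min hex (show t.1 - s.1 < d by omega) ⟨by omega, hex2⟩
    intro s t h
    by_contra hne
    rcases Nat.lt_or_ge s.1 t.1 with h1 | h1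
    · exact key s t h1 h
    · have h2 : t.1 < s.1 := by
        rcases Nat.lt_or_ge t.1 s.1 with h2 | h2
        · exact h2
        · exact absurd (Fin.ext (by omega : s.1 = t.1)) hne
      exact key t s h2 h.symm
  have hSc : ∀ n : Fin d, Supp (cyc n) := fun n => hfS _
  have hcyc : IsCycle (rsrc src tgt) (rtgt src tgt) hd cyc := by
    intro n
    rw [hcycdef]
    simp only
    rw [← hfc (i0 + n.1)]
    by_cases h1 : n.1 + 1 < d
    · rw [Nat.mod_eq_of_lt h1, ← Nat.add_assoc]
    · have h2 : n.1 + 1 = d := by have := n.2; omega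
      rw [h2, Nat.mod_self, show i0 + n.1 + 1 = i0 + d by omega, hfi]
      norm_num
  have key : ∀ a, walkDelta cyc a = 0 ∨ (walkDelta cyc a = 1 ∧ 0 < g a)
      ∨ (walkDelta cyc a = -1 ∧ g a < 0) := by
    intro a
    rcases walkDelta_cases hinj a with ⟨h0, _⟩ | ⟨h1, n, hn⟩ | ⟨h1, n, hn⟩
    · exact Or.inl h0
    · refine Or.inr (Or.inl ⟨h1, ?_⟩)
      have hs := hSc n
      rw [hSupp] at hs
      rw [hn] at hs
      simpa using hs
    · refine Or.inr (Or.inr ⟨h1, ?_⟩)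
      have hs := hSc n
      rw [hSupp] at hs
      rw [hn] at hs
      simpa using hs
  have hnz : walkDelta cyc ((cyc ⟨0, hd⟩).1) ≠ 0 := by
    rcases walkDelta_cases hinj ((cyc ⟨0, hd⟩).1) with ⟨h0, hcase⟩ | ⟨h1, _⟩ | ⟨h1, _⟩
    · rcases hcase with hnone | ⟨⟨n1, hn1⟩, ⟨n2, hn2⟩⟩
      · exact absurd rfl (hnone ⟨0, hd⟩)
      · have s1 := hSc n1
        have s2 := hSc n2
        rw [hSupp] at s1 s2
        rw [hn1] at s1
        rw [hn2] at s2
        simp at s1 s2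
        omega
    · rw [h1]; norm_num
    · rw [h1]; norm_num
  refine ⟨d, hd, cyc, hinj, ?_, hcyc, ?_, ?_, ?_, ?_, ?_⟩
  · intro n
    have hs := hSc n
    rw [hSupp] at hs
    unfold IsResidual
    rcases hb : (cyc n).2
    · simp only [hb, Bool.false_eq_true, if_false] at hs ⊢
      exact hneg _ hs
    · simp only [hb, if_true] at hs ⊢
      exact hpos _ hs
  · intro i
    rw [Finset.sum_sub_distrib, Finset.sum_sub_distrib, hcons i,
      walkDelta_div src tgt hd cyc hcyc i]
  · intro a h
    rcases key a with h0 | ⟨h1, hg⟩ | ⟨h1, hg⟩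
    · exact hpos a (by omega)
    · exact hpos a hg
    · omega
  · intro a h
    rcases key a with h0 | ⟨h1, hg⟩ | ⟨h1, hg⟩
    · exact hneg a (by omega)
    · omega
    · exact hneg a hg
  · refine Finset.sum_lt_sum (fun a _ => ?_) ⟨(cyc ⟨0, hd⟩).1, Finset.mem_univ _, ?_⟩
    · rcases key a with h0 | ⟨h1, hg⟩ | ⟨h1, hg⟩ <;> omega
    · rcases key ((cyc ⟨0, hd⟩).1) with h0 | ⟨h1, hg⟩ | ⟨h1, hg⟩
      · exact absurd h0 hnz
      · omega
      · omega
  · have hh : ∀ a : A, c a * g a = c a * walkDelta cyc a + c a * (g a - walkDelta cyc a) :=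
      fun a => by ring
    rw [Finset.sum_congr rfl (fun a _ => hh a), Finset.sum_add_distrib, walkDelta_cost]

end Extract
section MainLemmas

variable {V A : Type}

lemma circulation_cost_nonneg [Fintype V] [Fintype A] [DecidableEq V]
    (src tgt : A → V) (cap c x : A → ℤ)
    (hnc : ¬ ∃ (k : ℕ) (hk : 0 < k) (cyc : Fin k → A × Bool),
        (∀ i, IsResidual cap x (cyc i)) ∧
        IsCycle (rsrc src tgt) (rtgt src tgt) hk cyc ∧
        ∑ i, rcost c (cyc i) < 0) :
    ∀ N : ℕ, ∀ g : A → ℤ, (∑ a, (g a).natAbs) ≤ N →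
      (∀ i : V, ∑ a ∈ Finset.univ.filter (fun a => src a = i), g a
          = ∑ a ∈ Finset.univ.filter (fun a => tgt a = i), g a) →
      (∀ a, 0 < g a → x a < cap a) → (∀ a, g a < 0 → 0 < x a) →
      0 ≤ ∑ a, c a * g a := by
  intro N
  induction N with
  | zero =>
    intro g hN hcons hpos hneg
    have hz : ∀ a : A, g a = 0 := by
      intro a
      have h0 : ∑ a : A, (g a).natAbs = 0 := Nat.le_zero.mp hN
      have := (Finset.sum_eq_zero_iff.mp h0) a (Finset.mem_univ a)
      omega
    have : ∑ a, c a * g a = 0 := Finset.sum_eq_zero fun a _ => by rw [hz a]; ring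
    omega
  | succ N ih =>
    intro g hN hcons hpos hneg
    by_cases hz : ∀ a, g a = 0
    · have : ∑ a, c a * g a = 0 := Finset.sum_eq_zero fun a _ => by rw [hz a]; ring
      omega
    · push_neg at hz
      obtain ⟨a0, ha0⟩ := hz
      obtain ⟨k, hk, cyc, hinj, hres, hcyc, hcons', hpos', hneg', hdec, hcost⟩ :=
        extract_step src tgt cap c x g hcons hpos hneg a0 ha0
      have hcyccost : 0 ≤ ∑ n, rcost c (cyc n) := by
        by_contra hcc
        push_neg at hcc
        exact hnc ⟨k, hk, cyc, hres, hcyc, hcc⟩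
      have hrec := ih (fun a => g a - walkDelta cyc a) (by show ∑ a, (g a - walkDelta cyc a).natAbs ≤ N; omega) hcons' hpos' hneg'
      rw [hcost]
      exact add_nonneg hcyccost hrec

lemma negcirc_gives_cycle [Fintype V] [Fintype A] [DecidableEq V]
    (src tgt : A → V) (cap c x : A → ℤ) :
    ∀ N : ℕ, ∀ g : A → ℤ, (∑ a, (g a).natAbs) ≤ N →
      (∀ i : V, ∑ a ∈ Finset.univ.filter (fun a => src a = i), g a
          = ∑ a ∈ Finset.univ.filter (fun a => tgt a = i), g a) →
      (∀ a, 0 < g a → x a < cap a) → (∀ a, g a < 0 → 0 < x a) →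
      (∑ a, c a * g a < 0) →
      ∃ (k : ℕ) (hk : 0 < k) (cyc : Fin k → A × Bool),
        Function.Injective cyc ∧ (∀ i, IsResidual cap x (cyc i)) ∧
        IsCycle (rsrc src tgt) (rtgt src tgt) hk cyc ∧
        ∑ i, rcost c (cyc i) < 0 := by
  intro N
  induction N with
  | zero =>
    intro g hN hcons hpos hneg hcost
    exfalso
    have hz : ∀ a : A, g a = 0 := by
      intro a
      have h0 : ∑ a : A, (g a).natAbs = 0 := Nat.le_zero.mp hN
      have := (Finset.sum_eq_zero_iff.mp h0) a (Finset.mem_univ a)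
      omega
    have : ∑ a, c a * g a = 0 := Finset.sum_eq_zero fun a _ => by rw [hz a]; ring
    omega
  | succ N ih =>
    intro g hN hcons hpos hneg hcost
    have hz : ∃ a, g a ≠ 0 := by
      by_contra hzz
      push_neg at hzz
      have : ∑ a, c a * g a = 0 := Finset.sum_eq_zero fun a _ => by rw [hzz a]; ring
      omega
    obtain ⟨a0, ha0⟩ := hz
    obtain ⟨k, hk, cyc, hinj, hres, hcyc, hcons', hpos', hneg', hdec, hcosteq⟩ :=
      extract_step src tgt cap c x g hcons hpos hneg a0 ha0
    by_cases hcc : ∑ n, rcost c (cyc n) < 0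
    · exact ⟨k, hk, cyc, hinj, hres, hcyc, hcc⟩
    · push_neg at hcc
      have hcost' : ∑ a, c a * (g a - walkDelta cyc a) < 0 := by
        rw [hcosteq] at hcost
        omega
      exact ih (fun a => g a - walkDelta cyc a) (by show ∑ a, (g a - walkDelta cyc a).natAbs ≤ N; omega) hcons' hpos' hneg' hcost'

end MainLemmas

/-- a feasible flow is optimal iff the residual network contains no
directed cycle of negative total cost. -/
theorem negative_cycle_optimality [Fintype V] [Fintype A] [DecidableEq V]
    (src tgt : A → V) (b : V → ℤ) (cap c x : A → ℤ)
    (hx : IsFeasible src tgt b cap x) :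
    IsOptimal src tgt b cap c x ↔
      ¬ ∃ (k : ℕ) (hk : 0 < k) (cyc : Fin k → A × Bool),
          (∀ i, IsResidual cap x (cyc i)) ∧
          IsCycle (rsrc src tgt) (rtgt src tgt) hk cyc ∧
          ∑ i, rcost c (cyc i) < 0 := by
  classical
  constructor
  · rintro hopt ⟨k, hk, cyc, hres, hcyc, hsum⟩
    have hcons : ∀ i : V, ∑ a ∈ Finset.univ.filter (fun a => src a = i), walkDelta cyc a
        = ∑ a ∈ Finset.univ.filter (fun a => tgt a = i), walkDelta cyc a :=
      fun i => walkDelta_div src tgt hk cyc hcyc i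
    have hpos : ∀ a, 0 < walkDelta cyc a → x a < cap a := by
      intro a h
      obtain ⟨n, hn⟩ := walkDelta_pos cyc a h
      have hr := hres n
      rw [hn] at hr
      simpa [IsResidual] using hr
    have hneg : ∀ a, walkDelta cyc a < 0 → 0 < x a := by
      intro a h
      obtain ⟨n, hn⟩ := walkDelta_neg cyc a h
      have hr := hres n
      rw [hn] at hr
      simpa [IsResidual] using hr
    have hcost : ∑ a, c a * walkDelta cyc a < 0 := by rw [walkDelta_cost]; exact hsum
    obtain ⟨k', hk', cyc', hinj', hres', hcyc', hneg'⟩ :=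
      negcirc_gives_cycle src tgt cap c x (∑ a, (walkDelta cyc a).natAbs) (walkDelta cyc)
        le_rfl hcons hpos hneg hcost
    have hyfeas : IsFeasible src tgt b cap (fun a => x a + walkDelta cyc' a) := by
      constructor
      · intro a
        have hxa := hx.1 a
        rcases walkDelta_cases hinj' a with ⟨h0, -⟩ | ⟨h1, n, hn⟩ | ⟨h1, n, hn⟩
        · simp only [h0]
          omega
        · have hr := hres' n
          rw [hn] at hr
          simp only [IsResidual, if_true] at hr
          simp only [h1]
          omega
        · have hr := hres' n
          rw [hn] at hr
          simp only [IsResidual, Bool.false_eq_true, if_false] at hr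
          simp only [h1]
          omega
      · intro i
        have hxc := hx.2 i
        unfold excess at hxc ⊢
        rw [Finset.sum_add_distrib, Finset.sum_add_distrib,
          ← walkDelta_div src tgt hk' cyc' hcyc' i]
        omega
    have hle := hopt.2 _ hyfeas
    have heq : flowCost c (fun a => x a + walkDelta cyc' a)
        = flowCost c x + ∑ n, rcost c (cyc' n) := by
      unfold flowCost
      rw [← walkDelta_cost c cyc', ← Finset.sum_add_distrib]
      exact Finset.sum_congr rfl fun a _ => by ring
    rw [heq] at hle
    omega
  · intro hnc
    refine ⟨hx, fun y hy => ?_⟩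
    have hcons : ∀ i : V, ∑ a ∈ Finset.univ.filter (fun a => src a = i), (y a - x a)
        = ∑ a ∈ Finset.univ.filter (fun a => tgt a = i), (y a - x a) := by
      intro i
      have h1 := hx.2 i
      have h2 := hy.2 i
      unfold excess at h1 h2
      rw [Finset.sum_sub_distrib, Finset.sum_sub_distrib]
      omega
    have hpos : ∀ a, 0 < y a - x a → x a < cap a := by
      intro a h
      have := hy.1 a
      omega
    have hneg : ∀ a, y a - x a < 0 → 0 < x a := by
      intro a h
      have := hy.1 a
      omega
    have hnn := circulation_cost_nonneg src tgt cap c x hnc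
      (∑ a, (y a - x a).natAbs) (fun a => y a - x a) le_rfl hcons hpos hneg
    have heq : ∑ a, c a * (y a - x a) = flowCost c y - flowCost c x := by
      unfold flowCost
      rw [← Finset.sum_sub_distrib]
      exact Finset.sum_congr rfl fun a _ => by ring
    rw [heq] at hnn
    omega
end

section
/- A feasible flow x is optimal if and only if there exists a potential function π such that for every arc (i,j) of the original network: if c_{ij}^π > 0 then x_{ij} = 0; if 0 < x_{ij} < u_{ij} then c_{ij}^π = 0; and if c_{ij}^π < 0 then x_{ij} = u_{ij}. -/
open Finset

variable {V A : Type}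

section CSAux

variable {V A : Type} [Fintype V] [Fintype A] [DecidableEq V]

private lemma fiber_sum (g : A → V) (f : V → ℝ) (w : A → ℝ) :
    ∑ a, f (g a) * w a = ∑ i, f i * ∑ a ∈ univ.filter (fun a => g a = i), w a := by
  rw [← Finset.sum_fiberwise univ g (fun a => f (g a) * w a)]
  refine Finset.sum_congr rfl fun i _ => ?_
  rw [Finset.mul_sum]
  refine Finset.sum_congr rfl fun a ha => ?_
  rw [Finset.mem_filter] at ha
  rw [ha.2]

private lemma sufficiency (src tgt : A → V) (b : V → ℤ) (cap c x : A → ℤ)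
    (hx : IsFeasible src tgt b cap x) (π : V → ℝ)
    (h : ∀ a : A,
        (0 < (c a : ℝ) + π (src a) - π (tgt a) → x a = 0) ∧
        (0 < x a → x a < cap a → (c a : ℝ) + π (src a) - π (tgt a) = 0) ∧
        ((c a : ℝ) + π (src a) - π (tgt a) < 0 → x a = cap a)) :
    IsOptimal src tgt b cap c x := by
  refine ⟨hx, fun y hy => ?_⟩
  set w : A → ℝ := fun a => (y a : ℝ) - (x a : ℝ) with hw
  have cons : ∀ i, ∑ a ∈ univ.filter (fun a => src a = i), w a
      = ∑ a ∈ univ.filter (fun a => tgt a = i), w a := by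
    intro i
    have h1 := hx.2 i
    have h2 := hy.2 i
    unfold excess at h1 h2
    have hz : (∑ a ∈ univ.filter (fun a => src a = i), (y a - x a))
        = ∑ a ∈ univ.filter (fun a => tgt a = i), (y a - x a) := by
      rw [Finset.sum_sub_distrib, Finset.sum_sub_distrib]
      omega
    have := congrArg (fun z : ℤ => (z : ℝ)) hz
    push_cast at this
    simpa [hw] using this
  have e1 : ∑ a, π (src a) * w a = ∑ a, π (tgt a) * w a := by
    rw [fiber_sum src π w, fiber_sum tgt π w]
    exact Finset.sum_congr rfl fun i _ => by rw [cons i]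
  have expand : (flowCost c y : ℝ) - (flowCost c x : ℝ)
      = ∑ a, ((c a : ℝ) + π (src a) - π (tgt a)) * w a := by
    have split : ∑ a, ((c a : ℝ) + π (src a) - π (tgt a)) * w a
        = (∑ a, (c a : ℝ) * (y a : ℝ) - ∑ a, (c a : ℝ) * (x a : ℝ))
          + (∑ a, π (src a) * w a - ∑ a, π (tgt a) * w a) := by
      rw [← Finset.sum_sub_distrib, ← Finset.sum_sub_distrib, ← Finset.sum_add_distrib]
      refine Finset.sum_congr rfl fun a _ => ?_
      simp only [hw]
      ring
    rw [split, e1, sub_self, add_zero]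
    unfold flowCost
    push_cast
    ring
  have hterm : ∀ a ∈ (univ : Finset A),
      0 ≤ ((c a : ℝ) + π (src a) - π (tgt a)) * w a := by
    intro a _
    obtain ⟨h1, h2, h3⟩ := h a
    have hya := hy.1 a
    rcases lt_trichotomy ((c a : ℝ) + π (src a) - π (tgt a)) 0 with hr | hr | hr
    · have hcap := h3 hr
      have hyx : y a ≤ x a := hcap ▸ hya.2
      have : w a ≤ 0 := by
        rw [hw]
        simp only [sub_nonpos]
        exact_mod_cast hyx
      exact mul_nonneg_of_nonpos_of_nonpos hr.le this
    · rw [hr, zero_mul]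
    · have hzero := h1 hr
      have hyx : x a ≤ y a := by rw [hzero]; exact hya.1
      have : 0 ≤ w a := by
        rw [hw]
        simp only [sub_nonneg]
        exact_mod_cast hyx
      exact mul_nonneg hr.le this
  have : (flowCost c x : ℝ) ≤ (flowCost c y : ℝ) := by
    have := Finset.sum_nonneg hterm
    linarith [expand]
  exact_mod_cast this

end CSAux

section CSAux2

variable {V A : Type} [Fintype V] [Fintype A] [DecidableEq V]

/-- Every vertex-injective residual cycle has nonnegative cost. -/
private def CyclesNonneg (src tgt : A → V) (cap c x : A → ℤ) : Prop :=
  ∀ (k : ℕ) (hk : 0 < k) (cyc : Fin k → A × Bool),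
    (∀ i, IsResidual cap x (cyc i)) → IsCycle (rsrc src tgt) (rtgt src tgt) hk cyc →
    Function.Injective (fun i => rsrc src tgt (cyc i)) →
    0 ≤ ∑ i, rcost c (cyc i)

private lemma rot_val {k : ℕ} [NeZero k] (j : Fin k) :
    ((j + 1 : Fin k)).1 = (j.1 + 1) % k := by
  rw [Fin.add_def, Fin.val_one']
  conv_rhs => rw [Nat.add_mod, Nat.mod_eq_of_lt j.isLt]

private lemma sum_bool_split (src tgt : A → V) (f : A × Bool → ℤ) (i : V) :
    (∑ q ∈ univ.filter (fun q : A × Bool => rtgt src tgt q = i), f q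
      = ∑ a ∈ univ.filter (fun a => tgt a = i), f (a, true)
        + ∑ a ∈ univ.filter (fun a => src a = i), f (a, false)) ∧
    (∑ q ∈ univ.filter (fun q : A × Bool => rsrc src tgt q = i), f q
      = ∑ a ∈ univ.filter (fun a => src a = i), f (a, true)
        + ∑ a ∈ univ.filter (fun a => tgt a = i), f (a, false)) := by
  constructor <;>
  · rw [Finset.sum_filter, Finset.sum_filter, Finset.sum_filter, Fintype.sum_prod_type,
      ← Finset.sum_add_distrib]
    refine Finset.sum_congr rfl fun a _ => ?_
    rw [Fintype.sum_bool]
    simp [rtgt, rsrc]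

private lemma cycles_nonneg_of_optimal (src tgt : A → V) (b : V → ℤ) (cap c x : A → ℤ)
    (hopt : IsOptimal src tgt b cap c x) : CyclesNonneg src tgt cap c x := by
  classical
  intro k hk cyc hres hcycle hinj
  by_contra hneg
  push_neg at hneg
  have hcycinj : Function.Injective cyc := fun i j hij => hinj (by simp only [hij])
  set S : Finset (A × Bool) := Finset.univ.image cyc with hS
  set E : A × Bool → ℤ := fun q => if q ∈ S then 1 else 0 with hE
  set y : A → ℤ := fun a => x a + E (a, true) - E (a, false) with hy
  have hresS : ∀ q ∈ S, IsResidual cap x q := by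
    intro q hq
    rw [hS, Finset.mem_image] at hq
    obtain ⟨i, -, rfl⟩ := hq
    exact hres i
  have hsum_image : ∀ f : A × Bool → ℤ, ∑ q ∈ S, f q = ∑ j : Fin k, f (cyc j) := by
    intro f
    rw [hS, Finset.sum_image (fun i _ j _ hij => hcycinj hij)]
  have hEcount : ∀ g : A × Bool → V, ∀ i : V,
      ∑ q ∈ univ.filter (fun q => g q = i), E q
        = ∑ j : Fin k, (if g (cyc j) = i then (1 : ℤ) else 0) := by
    intro g i
    rw [← hsum_image (fun q => if g q = i then (1:ℤ) else 0),
      ← Finset.univ_inter S, ← Finset.sum_ite_mem, Finset.sum_filter]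
    refine Finset.sum_congr rfl fun q _ => ?_
    by_cases h1 : g q = i <;> by_cases h2 : q ∈ S <;> simp [h1, h2, hE]
  -- in-degree equals out-degree
  have hdeg : ∀ i : V,
      ∑ q ∈ univ.filter (fun q => rtgt src tgt q = i), E q
        = ∑ q ∈ univ.filter (fun q => rsrc src tgt q = i), E q := by
    intro i
    rw [hEcount, hEcount]
    haveI : NeZero k := ⟨hk.ne'⟩
    have := Equiv.sum_comp (Equiv.addRight (1 : Fin k))
      (fun j => if rsrc src tgt (cyc j) = i then (1 : ℤ) else 0)
    rw [← this]
    refine Finset.sum_congr rfl fun j _ => ?_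
    have hr : rtgt src tgt (cyc j) = rsrc src tgt (cyc (j + 1)) := by
      have h2 := hcycle j
      convert h2 using 3
      exact Fin.ext (rot_val j)
    simp only [Equiv.coe_addRight, hr]
    congr 1
  -- feasibility of y
  have hyfeas : IsFeasible src tgt b cap y := by
    constructor
    · intro a
      have hxa := hopt.1.1 a
      have h1 : (a, true) ∈ S → x a < cap a := by
        intro h
        have := hresS _ h
        simpa [IsResidual] using this
      have h2 : (a, false) ∈ S → 0 < x a := by
        intro h
        have := hresS _ h
        simpa [IsResidual] using this
      by_cases hh1 : (a, true) ∈ S <;> by_cases hh2 : (a, false) ∈ S <;>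
        simp only [hy, hE, hh1, hh2, if_pos, if_neg, if_true, if_false] <;>
        first
          | (constructor <;> omega)
          | (have := h1 hh1; have := h2 hh2; constructor <;> omega)
          | (have := h1 hh1; constructor <;> omega)
          | (have := h2 hh2; constructor <;> omega)
    · intro i
      have hx0 := hopt.1.2 i
      unfold excess at hx0 ⊢
      have hty : ∑ a ∈ univ.filter (fun a => tgt a = i), y a
          = ∑ a ∈ univ.filter (fun a => tgt a = i), x a
            + (∑ a ∈ univ.filter (fun a => tgt a = i), E (a, true)
              - ∑ a ∈ univ.filter (fun a => tgt a = i), E (a, false)) := by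
        rw [← Finset.sum_sub_distrib, ← Finset.sum_add_distrib]
        exact Finset.sum_congr rfl fun a _ => by simp only [hy]; ring
      have hsy : ∑ a ∈ univ.filter (fun a => src a = i), y a
          = ∑ a ∈ univ.filter (fun a => src a = i), x a
            + (∑ a ∈ univ.filter (fun a => src a = i), E (a, true)
              - ∑ a ∈ univ.filter (fun a => src a = i), E (a, false)) := by
        rw [← Finset.sum_sub_distrib, ← Finset.sum_add_distrib]
        exact Finset.sum_congr rfl fun a _ => by simp only [hy]; ring
      have hd := hdeg i
      rw [(sum_bool_split src tgt E i).1, (sum_bool_split src tgt E i).2] at hd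
      omega
  -- cost strictly decreases
  have hcost : flowCost c y < flowCost c x := by
    have hdiff : flowCost c y - flowCost c x = ∑ j : Fin k, rcost c (cyc j) := by
      unfold flowCost
      rw [← Finset.sum_sub_distrib, ← hsum_image (rcost c)]
      rw [← Finset.univ_inter S, ← Finset.sum_ite_mem, Fintype.sum_prod_type]
      have : ∀ a : A, (∑ bb : Bool, (if (a, bb) ∈ S then rcost c (a, bb) else 0))
          = c a * y a - c a * x a := by
        intro a
        rw [Fintype.sum_bool]
        by_cases hh1 : (a, true) ∈ S <;> by_cases hh2 : (a, false) ∈ S <;>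
          (simp [hy, hE, hh1, hh2, rcost]; try ring)
      rw [Finset.sum_congr rfl fun a _ => this a]
    omega
  have := hopt.2 y hyfeas
  omega

end CSAux2

section CSAux3

variable {V A : Type} [Fintype V] [Fintype A] [DecidableEq V]

/-- A residual walk of `m` arcs with vertex sequence `v`. -/
private def IsWalk (src tgt : A → V) (cap x : A → ℤ) (m : ℕ)
    (p : ℕ → A × Bool) (v : ℕ → V) : Prop :=
  ∀ i, i < m → IsResidual cap x (p i) ∧ rsrc src tgt (p i) = v i ∧
    rtgt src tgt (p i) = v (i + 1)

private lemma walk_cost_lb (src tgt : A → V) (cap c x : A → ℤ)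
    (hcyc : CyclesNonneg src tgt cap c x) :
    ∀ m (p : ℕ → A × Bool) (v : ℕ → V), IsWalk src tgt cap x m p v →
      -((Fintype.card V : ℤ) * ∑ q : A × Bool, |rcost c q|)
        ≤ ∑ i ∈ Finset.range m, rcost c (p i) := by
  intro m
  induction m using Nat.strong_induction_on with
  | _ m IH =>
  intro p v hw
  classical
  set C : ℤ := ∑ q : A × Bool, |rcost c q| with hC
  have hC0 : 0 ≤ C := Finset.sum_nonneg fun q _ => abs_nonneg _
  by_cases hrep : ∃ d, 0 < d ∧ ∃ s, s + d ≤ m ∧ v s = v (s + d)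
  · -- extract a minimal cycle and remove it
    obtain ⟨hg0, s, hsg, hveq⟩ := Nat.find_spec hrep
    set g := Nat.find hrep with hg
    have hmin : ∀ d, d < g → ¬(0 < d ∧ ∃ s, s + d ≤ m ∧ v s = v (s + d)) :=
      fun d hd => Nat.find_min hrep hd
    -- the extracted cycle
    set cyc : Fin g → A × Bool := fun i => p (s + i.1) with hcycdef
    have hresc : ∀ i : Fin g, IsResidual cap x (cyc i) :=
      fun i => (hw (s + i.1) (by omega)).1
    have hsrcc : ∀ i : Fin g, rsrc src tgt (cyc i) = v (s + i.1) :=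
      fun i => (hw (s + i.1) (by omega)).2.1
    have htgtc : ∀ i : Fin g, rtgt src tgt (cyc i) = v (s + i.1 + 1) :=
      fun i => (hw (s + i.1) (by omega)).2.2
    have hcinj : Function.Injective (fun i : Fin g => rsrc src tgt (cyc i)) := by
      intro i j hij
      simp only [hsrcc] at hij
      by_contra hne
      have hne' : i.1 ≠ j.1 := fun h => hne (Fin.ext h)
      rcases Nat.lt_or_ge i.1 j.1 with h | h
      · exact hmin (j.1 - i.1) (by omega)
          ⟨by omega, s + i.1, by omega, by
            have : s + i.1 + (j.1 - i.1) = s + j.1 := by omega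
            rw [this]; exact hij⟩
      · have h' : j.1 < i.1 := by omega
        exact hmin (i.1 - j.1) (by omega)
          ⟨by omega, s + j.1, by omega, by
            have : s + j.1 + (i.1 - j.1) = s + i.1 := by omega
            rw [this]; exact hij.symm⟩
    have hiscyc : IsCycle (rsrc src tgt) (rtgt src tgt) hg0 cyc := by
      intro i
      rw [htgtc i, hsrcc ⟨(i.1 + 1) % g, Nat.mod_lt _ hg0⟩]
      show v (s + i.1 + 1) = v (s + (i.1 + 1) % g)
      rcases Nat.lt_or_ge (i.1 + 1) g with h | h
      · rw [Nat.mod_eq_of_lt h, show s + (i.1 + 1) = s + i.1 + 1 by omega]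
      · have h1 : i.1 + 1 = g := by omega
        rw [h1, Nat.mod_self, Nat.add_zero]
        have h2 : s + i.1 + 1 = s + g := by omega
        rw [h2]
        exact hveq.symm
    have hcyc0 : 0 ≤ ∑ i : Fin g, rcost c (cyc i) := hcyc g hg0 cyc hresc hiscyc hcinj
    -- the shortened walk
    set m' := m - g with hm'
    set p' : ℕ → A × Bool := fun i => if i < s then p i else p (i + g) with hp'
    set v' : ℕ → V := fun i => if i ≤ s then v i else v (i + g) with hv'
    have hw' : IsWalk src tgt cap x m' p' v' := by
      intro i him
      by_cases his : i < s
      · have hwi := hw i (by omega)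
        refine ⟨by simpa [hp', his] using hwi.1, ?_, ?_⟩
        · simp only [hp', hv', if_pos his, if_pos (by omega : i ≤ s)]
          exact hwi.2.1
        · simp only [hp', hv', if_pos his]
          rcases Nat.lt_or_ge (i + 1) (s + 1) with h | h
          · rw [if_pos (by omega : i + 1 ≤ s)]
            exact hwi.2.2
          ·
            rw [if_pos (by omega : i + 1 ≤ s)]
            exact hwi.2.2
      · have hwi := hw (i + g) (by omega)
        refine ⟨by simpa [hp', his] using hwi.1, ?_, ?_⟩
        · simp only [hp', hv', if_neg his]
          by_cases his' : i ≤ s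
          · have : i = s := by omega
            subst this
            rw [if_pos le_rfl]
            rw [hwi.2.1]
            exact hveq.symm
          · rw [if_neg his']
            exact hwi.2.1
        · simp only [hp', hv', if_neg his, if_neg (by omega : ¬ i + 1 ≤ s)]
          rw [show i + 1 + g = i + g + 1 by omega]
          exact hwi.2.2
    have hIH := IH m' (by omega) p' v' hw'
    -- sum decomposition
    have hsplit : ∑ i ∈ Finset.range m, rcost c (p i)
        = ∑ i ∈ Finset.range m', rcost c (p' i) + ∑ i : Fin g, rcost c (cyc i) := by
      have e1 : ∑ i ∈ Finset.range m, rcost c (p i)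
          = ∑ i ∈ Finset.Ico 0 s, rcost c (p i) + ∑ i ∈ Finset.Ico s (s + g), rcost c (p i)
            + ∑ i ∈ Finset.Ico (s + g) m, rcost c (p i) := by
        rw [Finset.sum_Ico_consecutive _ (by omega : 0 ≤ s) (by omega : s ≤ s + g),
          Finset.sum_Ico_consecutive _ (by omega : (0:ℕ) ≤ s + g) (by omega : s + g ≤ m)]
        rw [← Finset.range_eq_Ico]
      have e2 : ∑ i ∈ Finset.range m', rcost c (p' i)
          = ∑ i ∈ Finset.Ico 0 s, rcost c (p' i) + ∑ i ∈ Finset.Ico s m', rcost c (p' i) := by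
        rw [Finset.sum_Ico_consecutive _ (by omega : 0 ≤ s) (by omega : s ≤ m')]
        rw [← Finset.range_eq_Ico]
      have e3 : ∑ i ∈ Finset.Ico 0 s, rcost c (p' i) = ∑ i ∈ Finset.Ico 0 s, rcost c (p i) :=
        Finset.sum_congr rfl fun i hi => by
          rw [Finset.mem_Ico] at hi
          simp [hp', hi.2]
      have e4 : ∑ i ∈ Finset.Ico s m', rcost c (p' i)
          = ∑ i ∈ Finset.Ico (s + g) m, rcost c (p i) := by
        rw [Finset.sum_Ico_eq_sum_range, Finset.sum_Ico_eq_sum_range]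
        have hmm : m - (s + g) = m' - s := by omega
        rw [hmm]
        refine Finset.sum_congr rfl fun i hi => ?_
        rw [Finset.mem_range] at hi
        simp only [hp', if_neg (by omega : ¬ s + i < s)]
        rw [show s + i + g = s + g + i by omega]
      have e5 : ∑ i : Fin g, rcost c (cyc i) = ∑ i ∈ Finset.Ico s (s + g), rcost c (p i) := by
        rw [Finset.sum_Ico_eq_sum_range]
        rw [show s + g - s = g by omega]
        exact Fin.sum_univ_eq_sum_range (fun i => rcost c (p (s + i))) g
      omega
    omega
  · -- all vertices distinct: the walk is short
    push_neg at hrep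
    have hvinj : Function.Injective (fun i : Fin (m + 1) => v i.1) := by
      intro i j hij
      simp only at hij
      by_contra hne
      have hne' : i.1 ≠ j.1 := fun h => hne (Fin.ext h)
      rcases Nat.lt_or_ge i.1 j.1 with h | h
      · exact absurd (by rw [show i.1 + (j.1 - i.1) = j.1 by omega]; exact hij)
          (hrep (j.1 - i.1) (by omega) i.1 (by omega))
      · exact absurd (by rw [show j.1 + (i.1 - j.1) = i.1 by omega]; exact hij.symm)
          (hrep (i.1 - j.1) (by omega) j.1 (by omega))
    have hcard : m + 1 ≤ Fintype.card V := by
      calc m + 1 = Fintype.card (Fin (m + 1)) := (Fintype.card_fin _).symm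
        _ ≤ Fintype.card V := Fintype.card_le_of_injective _ hvinj
    have hterm : ∀ i ∈ Finset.range m, -C ≤ rcost c (p i) := by
      intro i _
      have h1 : |rcost c (p i)| ≤ C := by
        rw [hC]
        exact Finset.single_le_sum (fun q _ => abs_nonneg (rcost c q)) (Finset.mem_univ _)
      have := neg_abs_le (rcost c (p i))
      omega
    have := Finset.card_nsmul_le_sum (Finset.range m) (fun i => rcost c (p i)) (-C) hterm
    rw [Finset.card_range, nsmul_eq_mul] at this
    have hm : (m : ℤ) ≤ Fintype.card V := by exact_mod_cast Nat.le_of_succ_le hcard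
    nlinarith [hC0]

end CSAux3

section CSAux4

variable {V A : Type} [Fintype V] [Fintype A] [DecidableEq V]

instance instDecIsResidual (cap x : A → ℤ) : DecidablePred (IsResidual cap x) := fun p => by
  unfold IsResidual
  infer_instance

/-- One Bellman–Ford relaxation step. -/
private def bfstep (src tgt : A → V) (cap c x : A → ℤ) (d : V → ℤ) (j : V) : ℤ :=
  (insert (d j)
    ((univ.filter (fun q : A × Bool => IsResidual cap x q ∧ rtgt src tgt q = j)).image
      (fun q => d (rsrc src tgt q) + rcost c q))).min' (Finset.insert_nonempty _ _)

/-- Bellman–Ford iteration on the residual network. -/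
private def bf (src tgt : A → V) (cap c x : A → ℤ) : ℕ → V → ℤ
  | 0 => fun _ => 0
  | (k + 1) => fun j => bfstep src tgt cap c x (bf src tgt cap c x k) j

private lemma bf_succ (src tgt : A → V) (cap c x : A → ℤ) (k : ℕ) (j : V) :
    bf src tgt cap c x (k + 1) j = bfstep src tgt cap c x (bf src tgt cap c x k) j := rfl

private lemma bf_succ_le (src tgt : A → V) (cap c x : A → ℤ) (k : ℕ) (j : V) :
    bf src tgt cap c x (k + 1) j ≤ bf src tgt cap c x k j := by
  rw [bf_succ]
  exact Finset.min'_le _ _ (Finset.mem_insert_self _ _)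

private lemma bf_le_arc (src tgt : A → V) (cap c x : A → ℤ) (k : ℕ) (q : A × Bool)
    (hq : IsResidual cap x q) :
    bf src tgt cap c x (k + 1) (rtgt src tgt q)
      ≤ bf src tgt cap c x k (rsrc src tgt q) + rcost c q := by
  rw [bf_succ]
  refine Finset.min'_le _ _ (Finset.mem_insert_of_mem ?_)
  exact Finset.mem_image_of_mem _ (Finset.mem_filter.2 ⟨Finset.mem_univ _, hq, rfl⟩)

private lemma bf_attained (src tgt : A → V) (cap c x : A → ℤ) (k : ℕ) (j : V) :
    bf src tgt cap c x (k + 1) j = bf src tgt cap c x k j ∨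
      ∃ q, IsResidual cap x q ∧ rtgt src tgt q = j ∧
        bf src tgt cap c x (k + 1) j = bf src tgt cap c x k (rsrc src tgt q) + rcost c q := by
  have hmem : bf src tgt cap c x (k + 1) j ∈ insert (bf src tgt cap c x k j)
      ((univ.filter (fun q : A × Bool => IsResidual cap x q ∧ rtgt src tgt q = j)).image
        (fun q => bf src tgt cap c x k (rsrc src tgt q) + rcost c q)) := by
    rw [bf_succ]
    exact Finset.min'_mem _ _
  rw [Finset.mem_insert] at hmem
  rcases hmem with h | h
  · exact Or.inl h
  · right
    rw [Finset.mem_image] at h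
    obtain ⟨q, hq, hval⟩ := h
    rw [Finset.mem_filter] at hq
    exact ⟨q, hq.2.1, hq.2.2, hval.symm⟩

private lemma bf_reach [Nonempty A] (src tgt : A → V) (cap c x : A → ℤ) (k : ℕ) (j : V) :
    ∃ m : ℕ, ∃ p : ℕ → A × Bool, ∃ v : ℕ → V, IsWalk src tgt cap x m p v ∧ v m = j ∧
      ∑ i ∈ Finset.range m, rcost c (p i) = bf src tgt cap c x k j := by
  classical
  induction k generalizing j with
  | zero =>
      exact ⟨0, fun _ => (Classical.arbitrary A, true), fun _ => j,
        fun i hi => absurd hi (by omega), rfl, by simp [bf]⟩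
  | succ k IH =>
      rcases bf_attained src tgt cap c x k j with h | ⟨q, hq, hqt, h⟩
      · obtain ⟨m, p, v, hw, hv, hs⟩ := IH j
        exact ⟨m, p, v, hw, hv, by rw [hs, h]⟩
      · obtain ⟨m, p, v, hw, hv, hs⟩ := IH (rsrc src tgt q)
        refine ⟨m + 1, fun i => if i < m then p i else q,
          fun i => if i ≤ m then v i else rtgt src tgt q, ?_, ?_, ?_⟩
        · intro i hi
          by_cases him : i < m
          · have hwi := hw i him
            refine ⟨by simpa [him] using hwi.1, ?_, ?_⟩
            · simp only [if_pos him, if_pos (by omega : i ≤ m)]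
              exact hwi.2.1
            · simp only [if_pos him, if_pos (by omega : i + 1 ≤ m)]
              exact hwi.2.2
          · have heq : i = m := by omega
            refine ⟨by simp [heq, hq], ?_, ?_⟩
            · simp only [heq, if_neg (lt_irrefl m), if_pos le_rfl]
              exact hv.symm
            · simp only [heq, if_neg (lt_irrefl m), if_neg (by omega : ¬ m + 1 ≤ m)]
        · show (if m + 1 ≤ m then v (m + 1) else rtgt src tgt q) = j
          rw [if_neg (by omega : ¬ m + 1 ≤ m)]
          exact hqt
        · rw [h, Finset.sum_range_succ]
          have h1 : rcost c ((fun i => if i < m then p i else q) m) = rcost c q := by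
            simp
          have h2 : ∑ i ∈ Finset.range m, rcost c ((fun i => if i < m then p i else q) i)
              = ∑ i ∈ Finset.range m, rcost c (p i) := by
            refine Finset.sum_congr rfl fun i hi => ?_
            rw [Finset.mem_range] at hi
            simp [hi]
          rw [h1, h2, hs]

private lemma bf_lb [Nonempty A] (src tgt : A → V) (cap c x : A → ℤ)
    (hcyc : CyclesNonneg src tgt cap c x) (k : ℕ) (j : V) :
    -((Fintype.card V : ℤ) * ∑ q : A × Bool, |rcost c q|) ≤ bf src tgt cap c x k j := by
  obtain ⟨m, p, v, hw, hv, hs⟩ := bf_reach src tgt cap c x k j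
  rw [← hs]
  exact walk_cost_lb src tgt cap c x hcyc m p v hw

private lemma bf_stab [Nonempty A] (src tgt : A → V) (cap c x : A → ℤ)
    (hcyc : CyclesNonneg src tgt cap c x) :
    ∃ K, ∀ j, bf src tgt cap c x (K + 1) j = bf src tgt cap c x K j := by
  classical
  by_contra hcon
  push_neg at hcon
  set B : ℤ := (Fintype.card V : ℤ) * ∑ q : A × Bool, |rcost c q| with hB
  set Φ : ℕ → ℤ := fun k => ∑ j, bf src tgt cap c x k j with hΦ
  have hstep : ∀ k, Φ (k + 1) ≤ Φ k - 1 := by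
    intro k
    obtain ⟨j, hj⟩ := hcon k
    have hlt : Φ (k + 1) < Φ k := by
      refine Finset.sum_lt_sum (fun i _ => bf_succ_le src tgt cap c x k i) ⟨j, Finset.mem_univ j, ?_⟩
      exact lt_of_le_of_ne (bf_succ_le src tgt cap c x k j) hj
    omega
  have hdesc : ∀ k, Φ k ≤ Φ 0 - k := by
    intro k
    induction k with
    | zero => simp
    | succ k IH =>
        have := hstep k
        push_cast
        push_cast at IH
        omega
  have hlb : ∀ k, -(Fintype.card V : ℤ) * B ≤ Φ k := by
    intro k
    have : ∀ j ∈ (univ : Finset V), -B ≤ bf src tgt cap c x k j :=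
      fun j _ => bf_lb src tgt cap c x hcyc k j
    have h2 := Finset.card_nsmul_le_sum (univ : Finset V) (fun j => bf src tgt cap c x k j) (-B) this
    rw [Finset.card_univ, nsmul_eq_mul] at h2
    calc -(Fintype.card V : ℤ) * B = (Fintype.card V : ℤ) * (-B) := by ring
      _ ≤ Φ k := h2
  set k0 : ℕ := (Φ 0 + (Fintype.card V : ℤ) * B + 1).toNat with hk0
  have h1 := hdesc k0
  have h2 := hlb k0
  have h3 := hlb 0
  have h4 : (0:ℤ) ≤ Φ 0 + (Fintype.card V : ℤ) * B := by linarith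
  have h5 : (k0 : ℤ) = Φ 0 + (Fintype.card V : ℤ) * B + 1 := by
    rw [hk0]
    exact Int.toNat_of_nonneg (by linarith)
  rw [h5] at h1
  linarith

end CSAux4

section CSAux5

variable {V A : Type} [Fintype V] [Fintype A] [DecidableEq V]

private lemma necessity [Nonempty A] (src tgt : A → V) (b : V → ℤ) (cap c x : A → ℤ)
    (hx : IsFeasible src tgt b cap x) (hopt : IsOptimal src tgt b cap c x) :
    ∃ π : V → ℝ, ∀ a : A,
      (0 < (c a : ℝ) + π (src a) - π (tgt a) → x a = 0) ∧
      (0 < x a → x a < cap a → (c a : ℝ) + π (src a) - π (tgt a) = 0) ∧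
      ((c a : ℝ) + π (src a) - π (tgt a) < 0 → x a = cap a) := by
  have hcyc : CyclesNonneg src tgt cap c x := cycles_nonneg_of_optimal src tgt b cap c x hopt
  obtain ⟨K, hK⟩ := bf_stab src tgt cap c x hcyc
  set D : V → ℤ := bf src tgt cap c x K with hD
  have harc : ∀ q : A × Bool, IsResidual cap x q →
      D (rtgt src tgt q) ≤ D (rsrc src tgt q) + rcost c q := by
    intro q hq
    have h1 := bf_le_arc src tgt cap c x K q hq
    rw [hK (rtgt src tgt q)] at h1
    exact h1
  have hfwd : ∀ a : A, x a < cap a → D (tgt a) ≤ D (src a) + c a := by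
    intro a h
    have hq : IsResidual cap x (a, true) := by simp [IsResidual, h]
    have := harc (a, true) hq
    simpa [rsrc, rtgt, rcost] using this
  have hbwd : ∀ a : A, 0 < x a → D (src a) ≤ D (tgt a) - c a := by
    intro a h
    have hq : IsResidual cap x (a, false) := by simp [IsResidual, h]
    have := harc (a, false) hq
    have h2 : D (src a) ≤ D (tgt a) + -c a := by simpa [rsrc, rtgt, rcost] using this
    omega
  refine ⟨fun i => ((D i : ℤ) : ℝ), fun a => ?_⟩
  refine ⟨?_, ?_, ?_⟩
  · intro h
    by_contra hxa
    have h0 : 0 < x a := lt_of_le_of_ne (hx.1 a).1 (Ne.symm hxa)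
    have h1 := hbwd a h0
    have h2 : (0:ℝ) < ((c a + D (src a) - D (tgt a) : ℤ) : ℝ) := by push_cast; linarith
    have h3 : (0:ℤ) < c a + D (src a) - D (tgt a) := by exact_mod_cast h2
    omega
  · intro h1 h2
    have e1 := hfwd a h2
    have e2 := hbwd a h1
    have e3 : c a + D (src a) - D (tgt a) = 0 := by omega
    have := congrArg (fun z : ℤ => (z : ℝ)) e3
    push_cast at this
    linarith
  · intro h
    by_contra hxa
    have h2 : x a < cap a := lt_of_le_of_ne (hx.1 a).2 hxa
    have h1 := hfwd a h2
    have h3 : ((c a + D (src a) - D (tgt a) : ℤ) : ℝ) < 0 := by push_cast; linarith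
    have h4 : c a + D (src a) - D (tgt a) < 0 := by exact_mod_cast h3
    omega

end CSAux5

/-- complementary slackness optimality conditions. -/
theorem complementary_slackness_optimality [Fintype V] [Fintype A] [DecidableEq V]
    (src tgt : A → V) (b : V → ℤ) (cap c x : A → ℤ)
    (hx : IsFeasible src tgt b cap x) :
    IsOptimal src tgt b cap c x ↔
      ∃ π : V → ℝ, ∀ a : A,
        (0 < (c a : ℝ) + π (src a) - π (tgt a) → x a = 0) ∧
        (0 < x a → x a < cap a → (c a : ℝ) + π (src a) - π (tgt a) = 0) ∧
        ((c a : ℝ) + π (src a) - π (tgt a) < 0 → x a = cap a) := by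
  constructor
  · intro hopt
    cases isEmpty_or_nonempty A with
    | inl h => exact ⟨fun _ => 0, fun a => (h.false a).elim⟩
    | inr h => exact necessity src tgt b cap c x hx hopt
  · rintro ⟨π, hπ⟩
    exact sufficiency src tgt b cap c x hx π hπ
end

section
/- In the cost-scaling refine procedure, decreasing the potential of a node i by ε (a relabel operation), when node i has no admissible outgoing residual arc, preserves the ε-optimality conditions: all residual arcs still have reduced cost at least −ε. -/
open Finset

variable {V A : Type}

/-- relabeling a node with no admissible outgoing residual arc
(decreasing its potential by `ε`) preserves the `ε`-optimality conditions. -/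
theorem relabel_preserves_eps_opt [DecidableEq V]
    (src tgt : A → V) (cap c x : A → ℤ) (π : V → ℝ) (ε : ℝ) (i : V) (hε : 0 ≤ ε)
    (hopt : ∀ p : A × Bool, IsResidual cap x p → -ε ≤ redcost src tgt c π p)
    (hnoadm : ∀ p : A × Bool, IsResidual cap x p → rsrc src tgt p = i →
        0 ≤ redcost src tgt c π p) :
    ∀ p : A × Bool, IsResidual cap x p →
      -ε ≤ redcost src tgt c (fun j => if j = i then π i - ε else π j) p := by
  intro p hp
  have hold := hopt p hp
  unfold redcost at *
  by_cases hs : rsrc src tgt p = i <;> by_cases ht : rtgt src tgt p = i <;>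
    simp only [hs, ht, if_true, if_false, eq_self_iff_true]
  · rw [hs, ht] at hold; linarith
  · have := hnoadm p hp hs
    rw [hs] at this
    linarith
  · rw [ht] at hold; linarith
  · linarith
end

section
/- The global update operation is valid: if S ⊂ V is a set of nodes containing all deficit nodes such that no admissible arc of the residual network enters S, then increasing the potential of every node in S by ε preserves the ε-optimality conditions. -/
open Finset

variable {V A : Type}

/-- the global update (set-relabel) operation is valid: if `S`
contains all deficit nodes and no admissible residual arc enters `S`, then
increasing the potential of every node of `S` by `ε` preserves `ε`-optimality. -/
theorem set_relabel_preserves_eps_opt [Fintype A] [DecidableEq V]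
    (src tgt : A → V) (b : V → ℤ) (cap c x : A → ℤ) (π : V → ℝ) (ε : ℝ)
    (S : Finset V) (hε : 0 ≤ ε)
    (hx : IsPseudoflow cap x)
    (hdef : ∀ i, excess src tgt b x i < 0 → i ∈ S)
    (hopt : ∀ p : A × Bool, IsResidual cap x p → -ε ≤ redcost src tgt c π p)
    (hnoadm : ∀ p : A × Bool, IsResidual cap x p →
        rtgt src tgt p ∈ S → rsrc src tgt p ∉ S → 0 ≤ redcost src tgt c π p) :
    ∀ p : A × Bool, IsResidual cap x p →
      -ε ≤ redcost src tgt c (fun i => if i ∈ S then π i + ε else π i) p := by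
  intro p hp
  have h1 := hopt p hp
  have h2 := hnoadm p hp
  unfold redcost at h1 h2 ⊢
  by_cases hs : rsrc src tgt p ∈ S <;> by_cases ht : rtgt src tgt p ∈ S <;>
    simp only [hs, ht, if_true, if_false] <;> [linarith; linarith; linarith [h2 ht hs]; linarith]
end

section
/- If an instance of the minimum-cost flow problem has an optimal solution, then it has an optimal spanning tree solution, i.e., an optimal feasible flow x together with a partition (T,L,U) of the arcs such that x_{ij}=0 for arcs in L, x_{ij}=u_{ij} for arcs in U, and the arcs in T form a spanning tree. -/
open Finset

variable {V A : Type}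

/-- No directed-residual cycle with distinct arcs within `S`. -/
def NoCyc [DecidableEq A] (src tgt : A → V) (S : Finset A) : Prop :=
  ∀ (k : ℕ) (hk : 0 < k) (cyc : Fin k → A × Bool),
    (∀ i, (cyc i).1 ∈ S) → (Function.Injective fun i => (cyc i).1) →
    IsCycle (rsrc src tgt) (rtgt src tgt) hk cyc → False

section Graph
variable [Fintype A] [DecidableEq V] [DecidableEq A]

lemma noSelfLoop {src tgt : A → V} {S : Finset A} (h : NoCyc src tgt S)
    {a : A} (ha : a ∈ S) : src a ≠ tgt a := by
  intro he
  exact h 1 one_pos (fun _ => (a, true)) (fun _ => ha)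
    (fun i j _ => Subsingleton.elim i j)
    (fun i => by simp [rsrc, rtgt, he])

lemma edgeInj {src tgt : A → V} {S : Finset A} (h : NoCyc src tgt S) :
    ∀ a ∈ S, ∀ b ∈ S, s(src a, tgt a) = s(src b, tgt b) → a = b := by
  intro a ha b hb he
  by_contra hab
  rw [Sym2.eq_iff] at he
  rcases he with ⟨h1, h2⟩ | ⟨h1, h2⟩
  · refine h 2 two_pos (fun i => if i = 0 then (a, true) else (b, false))
      (fun i => by rcases eq_or_ne i 0 with hi | hi <;> simp [hi, ha, hb]) ?_ ?_
    · intro i j hij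
      fin_cases i <;> fin_cases j <;> simp_all
    · intro i
      fin_cases i <;> simp [rsrc, rtgt, Fin.ext_iff, h1, h2]
  · refine h 2 two_pos (fun i => if i = 0 then (a, true) else (b, true))
      (fun i => by rcases eq_or_ne i 0 with hi | hi <;> simp [hi, ha, hb]) ?_ ?_
    · intro i j hij
      fin_cases i <;> fin_cases j <;> simp_all
    · intro i
      fin_cases i <;> simp [rsrc, rtgt, Fin.ext_iff, h1, h2]

lemma listCyc (src tgt : A → V) {S : Finset A} (h : NoCyc src tgt S)
    (l : List (A × Bool)) (hl : l ≠ [])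
    (hmem : ∀ p ∈ l, p.1 ∈ S)
    (hnd : (l.map Prod.fst).Nodup)
    (hch : l.Chain' (fun p q => rtgt src tgt p = rsrc src tgt q))
    (hcl : rtgt src tgt (l.getLast hl) = rsrc src tgt (l.head hl)) : False := by
  have hk : 0 < l.length := List.length_pos_iff.mpr hl
  apply h l.length hk (fun i => l.get i) (fun i => hmem _ (l.get_mem ..)) ?_ ?_
  · intro i j hij
    have hlen : (l.map Prod.fst).length = l.length := l.length_map _
    have h1 : (l.map Prod.fst).get ⟨i.1, by omega⟩ = (l.map Prod.fst).get ⟨j.1, by omega⟩ := by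
      simpa [List.getElem_map] using hij
    have h2 := (List.nodup_iff_injective_get.mp hnd) h1
    rw [Fin.mk.injEq] at h2
    exact Fin.ext h2
  · intro i
    by_cases hlast : i.1 + 1 = l.length
    · have h0 : (i.1 + 1) % l.length = 0 := by rw [hlast]; exact Nat.mod_self _
      have hgl : l.get i = l.getLast hl := by
        rw [List.getLast_eq_getElem, List.get_eq_getElem]
        congr 1
        omega
      have hhd : l.get ⟨(i.1 + 1) % l.length, Nat.mod_lt _ hk⟩ = l.head hl := by
        rw [List.head_eq_getElem_zero hl, List.get_eq_getElem]
        congr 1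
      dsimp only
      rw [hgl, hhd]; exact hcl
    · have hlt : i.1 + 1 < l.length := by omega
      have := List.isChain_iff_getElem.mp hch i.1 (by omega)
      simpa [Nat.mod_eq_of_lt hlt] using this

lemma walkToList {src tgt : A → V} {S : Finset A} :
    ∀ {u v : V} (w : (underlying src tgt S).Walk u v),
    ∃ l : List (A × Bool),
      (∀ p ∈ l, p.1 ∈ S) ∧
      l.map (fun p => s(src p.1, tgt p.1)) = w.edges ∧
      l.Chain' (fun p q => rtgt src tgt p = rsrc src tgt q) ∧
      (∀ hl : l ≠ [], rsrc src tgt (l.head hl) = u ∧ rtgt src tgt (l.getLast hl) = v) ∧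
      (l = [] → u = v) := by
  intro u v w
  induction w with
  | nil => exact ⟨[], by simp, by simp, List.isChain_nil, fun hl => absurd rfl hl, fun _ => rfl⟩
  | @cons u m v h p ih =>
    obtain ⟨l, hmem, hedges, hch, hends, hnil⟩ := ih
    obtain ⟨hne, a, haS, hcase⟩ := id h
    have build : ∀ q : A × Bool, q.1 = a → rsrc src tgt q = u → rtgt src tgt q = m →
        ∃ l' : List (A × Bool),
          (∀ p ∈ l', p.1 ∈ S) ∧
          l'.map (fun p => s(src p.1, tgt p.1)) = (SimpleGraph.Walk.cons h p).edges ∧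
          l'.Chain' (fun p q => rtgt src tgt p = rsrc src tgt q) ∧
          (∀ hl : l' ≠ [], rsrc src tgt (l'.head hl) = u ∧ rtgt src tgt (l'.getLast hl) = v) ∧
          (l' = [] → u = v) := by
      intro q hq1 hq2 hq3
      refine ⟨q :: l, ?_, ?_, ?_, ?_, by simp⟩
      · intro p hp
        rcases List.mem_cons.mp hp with h' | h'
        · rw [h', hq1]; exact haS
        · exact hmem p h' 
      · rw [SimpleGraph.Walk.edges_cons, List.map_cons, ← hedges]
        congr 1
        have he : s(src q.1, tgt q.1) = s(u, m) := by
          rcases hb : q.2 with _ | _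
          · simp only [rsrc, rtgt, hb, Bool.false_eq_true, if_false] at hq2 hq3
            rw [← hq2, ← hq3]
            exact Sym2.eq_swap
          · simp only [rsrc, rtgt, hb, if_true] at hq2 hq3
            rw [← hq2, ← hq3]
        exact he
      · rcases l with _ | ⟨r, l⟩
        · exact List.isChain_singleton _
        · refine List.isChain_cons_cons.mpr ⟨?_, hch⟩
          rw [hq3]
          exact ((hends (by simp)).1).symm
      · intro hl
        constructor
        · simp [hq2]
        · rcases l with _ | ⟨r, l⟩
          · simp only [List.getLast_singleton]
            rw [hq3]; exact (hnil rfl) ▸ rfl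
          · rw [List.getLast_cons (by simp)]
            exact (hends (by simp)).2
    rcases hcase with ⟨h1, h2⟩ | ⟨h1, h2⟩
    · exact build (a, true) rfl (by simp [rsrc, h1]) (by simp [rtgt, h2])
    · exact build (a, false) rfl (by simp [rsrc, h2]) (by simp [rtgt, h1])

lemma noCyc_not_reachable_erase {src tgt : A → V} {T : Finset A} (h : NoCyc src tgt T)
    {a : A} (ha : a ∈ T) :
    ¬ (underlying src tgt (T.erase a)).Reachable (tgt a) (src a) := by
  intro hr
  obtain ⟨w0⟩ := hr
  obtain ⟨w, hw⟩ := w0.toPath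
  obtain ⟨l, hmem, hedges, hch, hends, hnil⟩ := walkToList w
  apply listCyc src tgt h ((a, true) :: l) (by simp) ?_ ?_ ?_ ?_
  · intro p hp
    rcases List.mem_cons.mp hp with h' | h'
    · rw [h']; exact ha
    · exact Finset.erase_subset a T (hmem p h')
  · rw [List.map_cons]
    refine List.nodup_cons.mpr ⟨?_, ?_⟩
    · intro hmem'
      obtain ⟨p, hp, hp1⟩ := List.mem_map.mp hmem'
      exact Finset.ne_of_mem_erase (hp1 ▸ hmem p hp) rfl
    · have hnd : w.edges.Nodup := hw.isTrail.edges_nodup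
      rw [← hedges] at hnd
      have : List.map (fun p => s(src p.1, tgt p.1)) l
          = List.map (fun b => s(src b, tgt b)) (List.map Prod.fst l) := by
        rw [List.map_map]; rfl
      rw [this] at hnd
      exact List.Nodup.of_map _ hnd
  · rcases l with _ | ⟨r, l⟩
    · exact List.isChain_singleton _
    · refine List.isChain_cons_cons.mpr ⟨?_, hch⟩
      have := (hends (by simp)).1
      simp only [List.head_cons] at this
      simp [rtgt, this]
  · rcases l with _ | ⟨r, l⟩
    · simp [rtgt, rsrc, hnil rfl]
    · rw [List.getLast_cons (by simp), List.head_cons]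
      have := (hends (by simp)).2
      simpa [rsrc] using this

lemma noCyc_isAcyclic {src tgt : A → V} {T : Finset A} (h : NoCyc src tgt T) :
    (underlying src tgt T).IsAcyclic := by
  rw [SimpleGraph.isAcyclic_iff_forall_adj_isBridge]
  intro u v huv
  obtain ⟨hne, a, haT, hcase⟩ := id huv
  rw [SimpleGraph.isBridge_iff]
  intro hr
  have hedge : s(src a, tgt a) = s(u, v) := by
    rcases hcase with ⟨rfl, rfl⟩ | ⟨rfl, rfl⟩
    · rfl
    · exact Sym2.eq_swap
  have hle : (underlying src tgt T \ SimpleGraph.fromEdgeSet {s(u,v)}) ≤ underlying src tgt (T.erase a) := by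
    intro p q hpq
    rw [SimpleGraph.sdiff_adj] at hpq
    obtain ⟨⟨hpq1, e, heT, hec⟩, hnotE⟩ := hpq
    refine ⟨hpq1, e, Finset.mem_erase.mpr ⟨?_, heT⟩, hec⟩
    rintro rfl
    apply hnotE
    rw [SimpleGraph.fromEdgeSet_adj]
    refine ⟨?_, hpq1⟩
    rw [Set.mem_singleton_iff, ← hedge]
    rcases hec with ⟨rfl, rfl⟩ | ⟨rfl, rfl⟩
    · rfl
    · exact Sym2.eq_swap
  have hr' := SimpleGraph.Reachable.mono hle hr
  apply noCyc_not_reachable_erase h haT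
  rcases hcase with ⟨rfl, rfl⟩ | ⟨rfl, rfl⟩
  · exact hr'.symm
  · exact hr'

lemma card_noCyc_connected [Fintype V] {src tgt : A → V} {T : Finset A} (h : NoCyc src tgt T)
    (hc : (underlying src tgt T).Connected) : T.card = Fintype.card V - 1 := by
  classical
  have htree : (underlying src tgt T).IsTree := ⟨hc, noCyc_isAcyclic h⟩
  have hedge : (underlying src tgt T).edgeFinset = T.image (fun a => s(src a, tgt a)) := by
    ext e
    induction e with
    | _ u v =>
      simp only [SimpleGraph.mem_edgeFinset, SimpleGraph.mem_edgeSet, Finset.mem_image]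
      constructor
      · rintro ⟨hne, a, haT, hcase⟩
        refine ⟨a, haT, ?_⟩
        rcases hcase with ⟨rfl, rfl⟩ | ⟨rfl, rfl⟩
        · rfl
        · exact Sym2.eq_swap
      · rintro ⟨a, haT, he⟩
        have hne := noSelfLoop h haT
        rw [Sym2.eq_iff] at he
        rcases he with ⟨h1, h2⟩ | ⟨h1, h2⟩
        · exact ⟨h1 ▸ h2 ▸ hne, a, haT, Or.inl ⟨h1, h2⟩⟩
        · exact ⟨h1 ▸ h2 ▸ (Ne.symm hne), a, haT, Or.inr ⟨h1, h2⟩⟩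
  have hcard := htree.card_edgeFinset
  rw [hedge, Finset.card_image_of_injOn (fun a ha b hb he => edgeInj h a ha b hb he)] at hcard
  omega

lemma cycChain (src tgt : A → V) {T : Finset A} {k : ℕ} (hk : 0 < k) {cyc : Fin k → A × Bool}
    (hcyc : IsCycle (rsrc src tgt) (rtgt src tgt) hk cyc) {j₀ : Fin k}
    (hothers : ∀ i, i ≠ j₀ → (cyc i).1 ∈ T) :
    (underlying src tgt T).Reachable (rtgt src tgt (cyc j₀)) (rsrc src tgt (cyc j₀)) := by
  have hcyc' : ∀ i : Fin k, rtgt src tgt (cyc i)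
      = rsrc src tgt (cyc ⟨(i.1 + 1) % k, Nat.mod_lt _ hk⟩) := hcyc
  have step : ∀ i : Fin k, (cyc i).1 ∈ T →
      (underlying src tgt T).Reachable (rsrc src tgt (cyc i)) (rtgt src tgt (cyc i)) := by
    intro i hi
    by_cases he : rsrc src tgt (cyc i) = rtgt src tgt (cyc i)
    · rw [he]
    · refine SimpleGraph.Adj.reachable ⟨he, (cyc i).1, hi, ?_⟩
      rcases hb : (cyc i).2 with _ | _
      · right; simp [rsrc, rtgt, hb]
      · left; simp [rsrc, rtgt, hb]
  have main : ∀ m : ℕ, m < k →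
      (underlying src tgt T).Reachable (rtgt src tgt (cyc j₀))
        (rsrc src tgt (cyc ⟨(j₀.1 + 1 + m) % k, Nat.mod_lt _ hk⟩)) := by
    intro m
    induction m with
    | zero =>
      intro _
      have h0 := hcyc' j₀
      have : (⟨(j₀.1 + 1) % k, Nat.mod_lt _ hk⟩ : Fin k)
          = ⟨(j₀.1 + 1 + 0) % k, Nat.mod_lt _ hk⟩ := Fin.ext (by simp)
      rw [this] at h0
      rw [← h0]
    | succ m ih =>
      intro hm1
      have ihr := ih (by omega)
      have hne : (⟨(j₀.1 + 1 + m) % k, Nat.mod_lt _ hk⟩ : Fin k) ≠ j₀ := by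
        intro he
        have h1 : (j₀.1 + 1 + m) % k = j₀.1 := congrArg Fin.val he
        have h2 : j₀.1 % k = (j₀.1 + 1 + m) % k := by
          rw [h1, Nat.mod_eq_of_lt j₀.2]
        have h3 : k ∣ (j₀.1 + 1 + m) - j₀.1 := (Nat.modEq_iff_dvd' (by omega)).mp h2
        have h4 : k ∣ m + 1 := by
          have : j₀.1 + 1 + m - j₀.1 = m + 1 := by omega
          rwa [this] at h3
        have := Nat.le_of_dvd (by omega) h4
        omega
      have hstep := step _ (hothers _ hne)
      have hnext := hcyc' ⟨(j₀.1 + 1 + m) % k, Nat.mod_lt _ hk⟩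
      have hidx : ((j₀.1 + 1 + m) % k + 1) % k = (j₀.1 + 1 + (m + 1)) % k := by
        have : (j₀.1 + 1 + m) % k + 1 ≡ (j₀.1 + 1 + m) + 1 [MOD k] :=
          (Nat.mod_modEq (j₀.1 + 1 + m) k).add_right 1
        have h5 : j₀.1 + 1 + (m + 1) = (j₀.1 + 1 + m) + 1 := by omega
        rw [h5]
        exact this
      have hfin : (⟨((j₀.1 + 1 + m) % k + 1) % k, Nat.mod_lt _ hk⟩ : Fin k)
          = ⟨(j₀.1 + 1 + (m + 1)) % k, Nat.mod_lt _ hk⟩ := Fin.ext hidx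
      rw [hfin] at hnext
      rw [← hnext]
      exact ihr.trans hstep
  have hlast := main (k - 1) (by omega)
  have hidx0 : (⟨(j₀.1 + 1 + (k - 1)) % k, Nat.mod_lt _ hk⟩ : Fin k) = j₀ := by
    refine Fin.ext ?_
    have h1 : j₀.1 + 1 + (k - 1) = j₀.1 + k := by omega
    simp only [h1, Nat.add_mod_right]
    exact Nat.mod_eq_of_lt j₀.2
  rwa [hidx0] at hlast

lemma exists_maximal_noCyc (src tgt : A → V) (F : Finset A) (hF : NoCyc src tgt F) :
    ∃ T, F ⊆ T ∧ NoCyc src tgt T ∧ ∀ a ∉ T, ¬ NoCyc src tgt (insert a T) := by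
  classical
  have hne : (Finset.univ.filter (fun T : Finset A => F ⊆ T ∧ NoCyc src tgt T)).Nonempty :=
    ⟨F, by simp [hF]⟩
  obtain ⟨T, hT⟩ := Finset.exists_maximal hne
  have hTmem := hT.prop
  have hTmax : ∀ y ∈ Finset.univ.filter (fun T : Finset A => F ⊆ T ∧ NoCyc src tgt T), ¬ T < y :=
    fun y hy hlt => hT.not_gt hy hlt
  simp only [Finset.mem_filter, Finset.mem_univ, true_and] at hTmem
  refine ⟨T, hTmem.1, hTmem.2, fun a ha hnc => ?_⟩
  refine hTmax (insert a T) ?_ ?_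
  · simp only [Finset.mem_filter, Finset.mem_univ, true_and]
    exact ⟨hTmem.1.trans (Finset.subset_insert a T), hnc⟩
  · exact Finset.ssubset_insert ha

lemma maximal_connected (src tgt : A → V)
    (hconn : (underlying src tgt (Finset.univ : Finset A)).Connected)
    {T : Finset A} (hT : NoCyc src tgt T)
    (hmax : ∀ a ∉ T, ¬ NoCyc src tgt (insert a T)) :
    (underlying src tgt T).Connected := by
  have key : ∀ a : A, (underlying src tgt T).Reachable (src a) (tgt a) := by
    intro a
    by_contra hnr
    have haT : a ∉ T := by
      intro haT
      by_cases hst : src a = tgt a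
      · exact hnr (by rw [hst])
      · exact hnr (SimpleGraph.Adj.reachable ⟨hst, a, haT, Or.inl ⟨rfl, rfl⟩⟩)
    apply hmax a haT
    intro k hk cyc hmem hinj hcyc
    by_cases hu : ∃ j₀ : Fin k, (cyc j₀).1 = a
    · obtain ⟨j₀, hj₀⟩ := hu
      have hothers : ∀ i, i ≠ j₀ → (cyc i).1 ∈ T := by
        intro i hi
        rcases Finset.mem_insert.mp (hmem i) with h' | h'
        · exact absurd (hinj (h'.trans hj₀.symm)) hi
        · exact h'
      have hreach := cycChain src tgt hk hcyc hothers
      rcases hb : (cyc j₀).2 with _ | _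
      · apply hnr
        simpa [rsrc, rtgt, hb, hj₀] using hreach
      · apply hnr
        exact (by simpa [rsrc, rtgt, hb, hj₀] using hreach :
          (underlying src tgt T).Reachable (tgt a) (src a)).symm
    · push_neg at hu
      exact hT k hk cyc (fun i => (Finset.mem_insert.mp (hmem i)).resolve_left (hu i)) hinj hcyc
  have hpre : (underlying src tgt T).Preconnected := by
    intro u v
    obtain ⟨w⟩ := hconn.preconnected u v
    clear hconn
    induction w with
    | nil => exact SimpleGraph.Reachable.refl _
    | cons h p ih =>
      obtain ⟨hne, a, -, hcase⟩ := h
      rcases hcase with ⟨rfl, rfl⟩ | ⟨rfl, rfl⟩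
      · exact (key a).trans ih
      · exact (key a).symm.trans ih
  haveI := hconn.nonempty
  exact ⟨hpre⟩

end Graph

def freeArcs [Fintype A] (cap x : A → ℤ) : Finset A :=
  Finset.univ.filter fun a => 0 < x a ∧ x a < cap a

section Cancel
variable [Fintype A] [DecidableEq V] [DecidableEq A]

lemma cancel (src tgt : A → V) (b : V → ℤ) (cap c : A → ℤ) (x : A → ℤ)
    (hx : IsOptimal src tgt b cap c x)
    {k : ℕ} (hk : 0 < k) (cyc : Fin k → A × Bool)
    (hinj : Function.Injective fun i => (cyc i).1)
    (hcyc : IsCycle (rsrc src tgt) (rtgt src tgt) hk cyc)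
    (hfree : ∀ i, (cyc i).1 ∈ freeArcs cap x) :
    ∃ x', IsOptimal src tgt b cap c x' ∧
      (freeArcs cap x').card < (freeArcs cap x).card := by
  classical
  have hfree' : ∀ i : Fin k, 0 < x (cyc i).1 ∧ x (cyc i).1 < cap (cyc i).1 := by
    intro i
    have := hfree i
    simpa [freeArcs] using this
  set sg : Bool → ℤ := fun t => if t then 1 else -1 with hsg
  set dir : A → ℤ := fun a => ∑ j : Fin k, if (cyc j).1 = a then sg (cyc j).2 else 0 with hdir
  have hdir_eq : ∀ j : Fin k, dir ((cyc j).1) = sg (cyc j).2 := by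
    intro j
    rw [hdir]
    dsimp only
    rw [Finset.sum_eq_single j (fun i _ hij => by
      have : (cyc i).1 ≠ (cyc j).1 := fun hh => hij (hinj hh)
      simp [this]) (by simp)]
    simp
  have hdir_cases : ∀ a : A, (∃ j, (cyc j).1 = a) ∨ dir a = 0 := by
    intro a
    by_cases hcc : ∃ j, (cyc j).1 = a
    · exact Or.inl hcc
    · right; rw [hdir]; dsimp only
      apply Finset.sum_eq_zero
      intro j _
      have : (cyc j).1 ≠ a := fun hh => hcc ⟨j, hh⟩
      simp [this]
  set C : ℤ := ∑ j : Fin k, c (cyc j).1 * sg (cyc j).2 with hC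
  set ε : ℤ := if 0 ≤ C then -1 else 1 with hε
  have hεC : ε * C ≤ 0 := by
    rw [hε]; split
    · nlinarith
    · nlinarith
  have hε1 : ε = 1 ∨ ε = -1 := by rw [hε]; split <;> simp
  have hsg1 : ∀ j : Fin k, ε * sg (cyc j).2 = 1 ∨ ε * sg (cyc j).2 = -1 := by
    intro j
    rw [hsg]
    rcases hε1 with h | h <;> rw [h] <;> rcases (cyc j).2 <;> simp
  set room : Fin k → ℤ :=
    fun j => if ε * sg (cyc j).2 = 1 then cap (cyc j).1 - x (cyc j).1 else x (cyc j).1 with hroom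
  have hroom1 : ∀ j, 1 ≤ room j := by
    intro j
    have hf := hfree' j
    rw [hroom]; dsimp only
    split <;> omega
  have himne : (Finset.univ.image room).Nonempty :=
    ⟨room ⟨0, hk⟩, Finset.mem_image_of_mem room (Finset.mem_univ _)⟩
  set δ : ℤ := Finset.min' (Finset.univ.image room) himne with hδ
  have hδ_le : ∀ j, δ ≤ room j :=
    fun j => Finset.min'_le _ _ (Finset.mem_image_of_mem room (Finset.mem_univ j))
  obtain ⟨jm, -, hjm⟩ := Finset.mem_image.mp (Finset.min'_mem (Finset.univ.image room) himne)
  have hδ1 : 1 ≤ δ := by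
    have := hroom1 jm
    rw [hjm] at this
    exact this
  set x' : A → ℤ := fun a => x a + ε * δ * dir a with hx'
  have key : ∀ j : Fin k,
      (ε * sg (cyc j).2 = 1 ∧ x' (cyc j).1 = x (cyc j).1 + δ) ∨
      (ε * sg (cyc j).2 = -1 ∧ x' (cyc j).1 = x (cyc j).1 - δ) := by
    intro j
    have hev : x' (cyc j).1 = x (cyc j).1 + ε * δ * sg (cyc j).2 := by
      rw [hx']; dsimp only; rw [hdir_eq j]
    rcases hsg1 j with hh | hh
    · left; exact ⟨hh, by rw [hev]; linear_combination δ * hh⟩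
    · right; exact ⟨hh, by rw [hev]; linear_combination δ * hh⟩
  have hpf : IsPseudoflow cap x' := by
    intro a
    rcases hdir_cases a with ⟨j, rfl⟩ | h0
    · have hf := hfree' j
      have hr := hδ_le j
      rcases key j with ⟨hh, he⟩ | ⟨hh, he⟩
      · rw [hroom] at hr; dsimp only at hr; rw [if_pos hh] at hr
        omega
      · rw [hroom] at hr; dsimp only at hr; rw [if_neg (by omega)] at hr
        omega
    · have hval : x' a = x a := by rw [hx']; dsimp only; rw [h0]; ring
      rw [hval]
      exact hx.1.1 a
  have consv : ∀ i : V,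
      (∑ a ∈ Finset.univ.filter (fun a => tgt a = i), dir a)
      - (∑ a ∈ Finset.univ.filter (fun a => src a = i), dir a) = 0 := by
    intro i
    have h1 : ∀ f : A → V, (∑ a ∈ Finset.univ.filter (fun a => f a = i), dir a)
        = ∑ j : Fin k, (if f (cyc j).1 = i then sg (cyc j).2 else 0) := by
      intro f
      rw [hdir]
      dsimp only
      rw [Finset.sum_comm]
      refine Finset.sum_congr rfl fun j _ => ?_
      rw [Finset.sum_ite_eq]
      simp [Finset.mem_filter]
    rw [h1 tgt, h1 src, ← Finset.sum_sub_distrib]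
    have h2 : ∀ j : Fin k,
        (if tgt (cyc j).1 = i then sg (cyc j).2 else 0) - (if src (cyc j).1 = i then sg (cyc j).2 else 0)
        = (if rtgt src tgt (cyc j) = i then (1:ℤ) else 0) - (if rsrc src tgt (cyc j) = i then (1:ℤ) else 0) := by
      intro j
      rcases hb : (cyc j).2 with _ | _ <;>
        simp only [rsrc, rtgt, hb, hsg, Bool.false_eq_true, if_false, if_true] <;>
        split_ifs <;> ring
    rw [Finset.sum_congr rfl (fun j _ => h2 j), Finset.sum_sub_distrib]
    have hcyc' : ∀ i : Fin k, rtgt src tgt (cyc i)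
        = rsrc src tgt (cyc ⟨(i.1 + 1) % k, Nat.mod_lt _ hk⟩) := hcyc
    have hrot : Function.Bijective (fun j : Fin k => (⟨(j.1 + 1) % k, Nat.mod_lt _ hk⟩ : Fin k)) := by
      refine Finite.injective_iff_bijective.mp ?_
      intro i1 i2 hh
      have h' : (i1.1 + 1) % k = (i2.1 + 1) % k := congrArg Fin.val hh
      have h'' : i1.1 % k = i2.1 % k := Nat.ModEq.add_right_cancel' 1 h'
      rw [Nat.mod_eq_of_lt i1.2, Nat.mod_eq_of_lt i2.2] at h''
      exact Fin.ext h''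
    have h3 : (∑ j : Fin k, (if rtgt src tgt (cyc j) = i then (1:ℤ) else 0))
        = ∑ j : Fin k, (if rsrc src tgt (cyc j) = i then (1:ℤ) else 0) := by
      refine Fintype.sum_bijective _ hrot _ _ fun j => ?_
      rw [hcyc' j]
    rw [h3]; ring
  have hsum : ∀ (f : A → V) (i : V), (∑ a ∈ Finset.univ.filter (fun a => f a = i), x' a)
      = (∑ a ∈ Finset.univ.filter (fun a => f a = i), x a)
        + ε * δ * (∑ a ∈ Finset.univ.filter (fun a => f a = i), dir a) := by
    intro f i
    rw [hx']
    dsimp only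
    rw [Finset.sum_add_distrib, Finset.mul_sum]
  have hfeas : IsFeasible src tgt b cap x' := by
    refine ⟨hpf, fun i => ?_⟩
    have h0 := hx.1.2 i
    unfold excess at h0 ⊢
    have h4 : (∑ a ∈ Finset.univ.filter (fun a => tgt a = i), dir a)
        = ∑ a ∈ Finset.univ.filter (fun a => src a = i), dir a := by
      have := consv i; linarith
    rw [hsum tgt i, hsum src i, h4]
    linarith
  have h3 : (∑ a : A, c a * dir a) = C := by
    rw [hC, hdir]
    dsimp only
    have hmul : ∀ a : A, c a * (∑ j : Fin k, if (cyc j).1 = a then sg (cyc j).2 else 0)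
        = ∑ j : Fin k, if (cyc j).1 = a then c a * sg (cyc j).2 else 0 := by
      intro a
      rw [Finset.mul_sum]
      refine Finset.sum_congr rfl fun j _ => ?_
      split <;> simp
    rw [Finset.sum_congr rfl fun a _ => hmul a, Finset.sum_comm]
    refine Finset.sum_congr rfl fun j _ => ?_
    have hres : ∀ a0 : A, (∑ a : A, if a0 = a then c a * sg (cyc j).2 else 0)
        = c a0 * sg (cyc j).2 := by
      intro a0
      rw [Finset.sum_ite_eq]
      simp
    have : (∑ a : A, if (cyc j).1 = a then c a * sg (cyc j).2 else 0)
        = c (cyc j).1 * sg (cyc j).2 := hres (cyc j).1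
    exact this
  have hcost : flowCost c x' = flowCost c x + ε * δ * C := by
    unfold flowCost
    rw [hx']
    dsimp only
    rw [← h3, Finset.mul_sum, ← Finset.sum_add_distrib]
    refine Finset.sum_congr rfl fun a _ => ?_
    ring
  have hle : flowCost c x' ≤ flowCost c x := by
    rw [hcost]
    nlinarith [hεC, hδ1]
  have hopt' : IsOptimal src tgt b cap c x' :=
    ⟨hfeas, fun y hy => le_trans hle (hx.2 y hy)⟩
  refine ⟨x', hopt', Finset.card_lt_card ⟨?_, ?_⟩⟩
  · intro a ha
    rcases hdir_cases a with ⟨j, rfl⟩ | h0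
    · exact hfree j
    · simp only [freeArcs, Finset.mem_filter, Finset.mem_univ, true_and] at ha ⊢
      have hval : x' a = x a := by rw [hx']; dsimp only; rw [h0]; ring
      rw [hval] at ha
      exact ha
  · intro hsub
    have hm : (cyc jm).1 ∈ freeArcs cap x := hfree jm
    have hm' := hsub hm
    simp only [freeArcs, Finset.mem_filter, Finset.mem_univ, true_and] at hm'
    rcases key jm with ⟨hh, he⟩ | ⟨hh, he⟩
    · have hrv : room jm = cap (cyc jm).1 - x (cyc jm).1 := by
        rw [hroom]; dsimp only; rw [if_pos hh]
      have hjv : room jm = δ := hjm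
      omega
    · have hrv : room jm = x (cyc jm).1 := by
        rw [hroom]; dsimp only; rw [if_neg (by omega)]
      have hjv : room jm = δ := hjm
      omega

end Cancel

/-- if the minimum-cost flow problem (on a weakly connected network)
has an optimal solution, then it has an optimal spanning tree solution. -/
theorem exists_optimal_spanning_tree_solution
    [Fintype V] [Fintype A] [DecidableEq V] [DecidableEq A]
    (src tgt : A → V) (b : V → ℤ) (cap c : A → ℤ) (x₀ : A → ℤ)
    (hconn : (underlying src tgt (Finset.univ : Finset A)).Connected)
    (hcap : ∀ a, 0 ≤ cap a)
    (hopt : IsOptimal src tgt b cap c x₀) :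
    ∃ (x : A → ℤ) (T L U : Finset A),
      IsOptimal src tgt b cap c x ∧
      Disjoint T L ∧ Disjoint T U ∧ Disjoint L U ∧
      T ∪ L ∪ U = Finset.univ ∧
      (underlying src tgt T).Connected ∧ T.card = Fintype.card V - 1 ∧
      (∀ a ∈ L, x a = 0) ∧ (∀ a ∈ U, x a = cap a) := by
  classical
  -- pick an optimal flow minimizing the number of free arcs
  have hex : ∃ n, ∃ x, IsOptimal src tgt b cap c x ∧ (freeArcs cap x).card = n :=
    ⟨_, x₀, hopt, rfl⟩
  obtain ⟨x, hxo, hxcard⟩ := Nat.find_spec hex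
  have hmin : ∀ y, IsOptimal src tgt b cap c y →
      (freeArcs cap x).card ≤ (freeArcs cap y).card := by
    intro y hy
    by_contra hlt
    push_neg at hlt
    rw [hxcard] at hlt
    exact Nat.find_min hex hlt ⟨y, hy, rfl⟩
  -- the free arcs contain no residual cycle
  have hNC : NoCyc src tgt (freeArcs cap x) := by
    intro k hk cyc hmem hinj hcyc
    obtain ⟨x', hx'o, hx'lt⟩ := cancel src tgt b cap c x hxo hk cyc hinj hcyc hmem
    have := hmin x' hx'o
    omega
  obtain ⟨T, hFT, hTnc, hTmax⟩ := exists_maximal_noCyc src tgt (freeArcs cap x) hNC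
  have hTconn := maximal_connected src tgt hconn hTnc hTmax
  have hTcard := card_noCyc_connected hTnc hTconn
  refine ⟨x, T, (Finset.univ \ T).filter (fun a => x a = 0),
      (Finset.univ \ T).filter (fun a => x a ≠ 0), hxo, ?_, ?_, ?_, ?_, hTconn, hTcard, ?_, ?_⟩
  · exact Finset.disjoint_left.mpr fun a ha ha' => by
      have := (Finset.mem_filter.mp ha').1
      simp [Finset.mem_sdiff, ha] at this
  · exact Finset.disjoint_left.mpr fun a ha ha' => by
      have := (Finset.mem_filter.mp ha').1
      simp [Finset.mem_sdiff, ha] at this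
  · exact Finset.disjoint_left.mpr fun a ha ha' => by
      have h1 := (Finset.mem_filter.mp ha).2
      have h2 := (Finset.mem_filter.mp ha').2
      exact h2 h1
  · ext a
    simp only [Finset.mem_union, Finset.mem_filter, Finset.mem_sdiff, Finset.mem_univ, true_and]
    constructor
    · intro _; trivial
    · intro _
      by_cases haT : a ∈ T
      · exact Or.inl (Or.inl haT)
      · by_cases hz : x a = 0
        · exact Or.inl (Or.inr ⟨haT, hz⟩)
        · exact Or.inr ⟨haT, hz⟩
  · intro a ha
    exact (Finset.mem_filter.mp ha).2
  · intro a ha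
    have h1 := Finset.mem_filter.mp ha
    have haT : a ∉ T := (Finset.mem_sdiff.mp h1.1).2
    have hanf : a ∉ freeArcs cap x := fun hf => haT (hFT hf)
    have hb := hxo.1.1 a
    simp only [freeArcs, Finset.mem_filter, Finset.mem_univ, true_and, not_and, not_lt] at hanf
    have hnz := h1.2
    omega
end

section
/- Any feasible flow can be transformed into a spanning tree solution whose total cost is less than or equal to the total cost of the original flow. -/
open Finset

variable {V A : Type}

lemma rot_sum {E : Type} [DecidableEq V] {k : ℕ} (hk : 0 < k)
    (s t : E → V) (cyc : Fin k → E) (hcyc : IsCycle s t hk cyc) (i : V) :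
    ∑ j : Fin k, ((if t (cyc j) = i then (1:ℤ) else 0) - (if s (cyc j) = i then 1 else 0)) = 0 := by
  haveI : NeZero k := ⟨hk.ne'⟩
  rw [Finset.sum_sub_distrib]
  have h1 : ∀ j : Fin k, (⟨(j.1 + 1) % k, Nat.mod_lt _ hk⟩ : Fin k) = j + 1 := by
    intro j
    ext
    simp only [Fin.add_def, Fin.val_one']
    conv_lhs => rw [Nat.add_mod]
    conv_rhs => rw [Nat.add_mod]
    rw [Nat.mod_mod_of_dvd _ dvd_rfl]
  have h2 : ∀ j : Fin k, t (cyc j) = s (cyc (j + 1)) := fun j => by rw [← h1]; exact hcyc j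
  have h3 : ∑ j : Fin k, (if t (cyc j) = i then (1:ℤ) else 0)
      = ∑ j : Fin k, (if s (cyc j) = i then (1:ℤ) else 0) := by
    calc ∑ j : Fin k, (if t (cyc j) = i then (1:ℤ) else 0)
        = ∑ j : Fin k, (if s (cyc (j + 1)) = i then (1:ℤ) else 0) :=
          Finset.sum_congr rfl fun j _ => by rw [h2]
      _ = _ := Fintype.sum_equiv (Equiv.addRight (1 : Fin k)) _ _ (fun j => rfl)
  rw [h3, sub_self]
lemma cancel_cycle [Fintype V] [Fintype A] [DecidableEq V] [DecidableEq A]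
    (src tgt : A → V) (b : V → ℤ) (cap c x : A → ℤ)
    (hx : IsFeasible src tgt b cap x)
    {k : ℕ} (hk : 0 < k) (cyc : Fin k → A × Bool)
    (hcyc : IsCycle (rsrc src tgt) (rtgt src tgt) hk cyc)
    (hinj : Function.Injective (fun j => (cyc j).1))
    (hfree : ∀ j, 0 < x (cyc j).1 ∧ x (cyc j).1 < cap (cyc j).1) :
    ∃ x', IsFeasible src tgt b cap x' ∧ flowCost c x' ≤ flowCost c x ∧
      (∀ a, 0 < x' a ∧ x' a < cap a → 0 < x a ∧ x a < cap a) ∧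
      ∃ a, (0 < x a ∧ x a < cap a) ∧ ¬(0 < x' a ∧ x' a < cap a) := by
  classical
  set sg : Bool → ℤ := fun e => if e then 1 else -1 with hsg
  have hsgT : sg true = 1 := rfl
  have hsgF : sg false = -1 := rfl
  set d : A → ℤ := fun a => ∑ j : Fin k, if (cyc j).1 = a then sg (cyc j).2 else 0 with hd
  have hne : (Finset.univ : Finset (Fin k)).Nonempty := ⟨⟨0, hk⟩, Finset.mem_univ _⟩
  set S : ℤ := ∑ j, rcost c (cyc j) with hS
  set slackP : Fin k → ℤ := fun j => if (cyc j).2 then cap (cyc j).1 - x (cyc j).1 else x (cyc j).1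
    with hslackP
  set slackM : Fin k → ℤ := fun j => if (cyc j).2 then x (cyc j).1 else cap (cyc j).1 - x (cyc j).1
    with hslackM
  have hslackPT : ∀ j, (cyc j).2 = true → slackP j = cap (cyc j).1 - x (cyc j).1 := by
    intro j hj; rw [hslackP]; simp [hj]
  have hslackPF : ∀ j, (cyc j).2 = false → slackP j = x (cyc j).1 := by
    intro j hj; rw [hslackP]; simp [hj]
  have hslackMT : ∀ j, (cyc j).2 = true → slackM j = x (cyc j).1 := by
    intro j hj; rw [hslackM]; simp [hj]
  have hslackMF : ∀ j, (cyc j).2 = false → slackM j = cap (cyc j).1 - x (cyc j).1 := by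
    intro j hj; rw [hslackM]; simp [hj]
  set δ : ℤ := if S ≤ 0 then Finset.univ.inf' hne slackP else -(Finset.univ.inf' hne slackM)
    with hδ
  have hdj : ∀ j, d ((cyc j).1) = sg (cyc j).2 := by
    intro j
    rw [hd]
    refine Finset.sum_eq_single_of_mem j (Finset.mem_univ j) (fun j' _ hj' => if_neg ?_) |>.trans
      (if_pos rfl)
    exact fun h => hj' (hinj h)
  have hd0 : ∀ a, (∀ j, (cyc j).1 ≠ a) → d a = 0 := fun a h =>
    Finset.sum_eq_zero (fun j _ => if_neg (h j))
  have hPpos : ∀ j, 0 < slackP j := by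
    intro j; have := hfree j; rw [hslackP]; dsimp only; split <;> omega
  have hMpos : ∀ j, 0 < slackM j := by
    intro j; have := hfree j; rw [hslackM]; dsimp only; split <;> omega
  have hinfP : 0 < Finset.univ.inf' hne slackP := by
    rw [Finset.lt_inf'_iff]; exact fun j _ => hPpos j
  have hinfM : 0 < Finset.univ.inf' hne slackM := by
    rw [Finset.lt_inf'_iff]; exact fun j _ => hMpos j
  have key : ∀ j, -(slackM j) ≤ δ ∧ δ ≤ slackP j := by
    intro j
    have h1 : Finset.univ.inf' hne slackP ≤ slackP j := Finset.inf'_le _ (Finset.mem_univ j)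
    have h2 : Finset.univ.inf' hne slackM ≤ slackM j := Finset.inf'_le _ (Finset.mem_univ j)
    have h3 := hPpos j; have h4 := hMpos j
    rw [hδ]; split <;> constructor <;> omega
  set x' : A → ℤ := fun a => x a + δ * d a with hx'
  have hximg : ∀ j, x' ((cyc j).1) = x ((cyc j).1) + δ * sg (cyc j).2 := by
    intro j; rw [hx']; dsimp only; rw [hdj j]
  have hxoth : ∀ a, (∀ j, (cyc j).1 ≠ a) → x' a = x a := by
    intro a h; rw [hx']; dsimp only; rw [hd0 a h]; ring
  have hpseudo : IsPseudoflow cap x' := by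
    intro a
    by_cases ha : ∃ j, (cyc j).1 = a
    · obtain ⟨j, rfl⟩ := ha
      have hkey := key j; have hf := hfree j
      rw [hximg j]
      rcases Bool.eq_false_or_eq_true (cyc j).2 with hb | hb
      · rw [hslackPT j hb, hslackMT j hb] at hkey
        rw [hb, hsgT, mul_one]
        omega
      · rw [hslackPF j hb, hslackMF j hb] at hkey
        rw [hb, hsgF, mul_neg_one]
        omega
    · push_neg at ha
      rw [hxoth a ha]; exact hx.1 a
  have hsum : ∀ (f : A → V) (i : V),
      ∑ a ∈ Finset.univ.filter (fun a => f a = i), d a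
        = ∑ j : Fin k, if f ((cyc j).1) = i then sg (cyc j).2 else 0 := by
    intro f i
    rw [hd]
    dsimp only
    rw [Finset.sum_comm]
    refine Finset.sum_congr rfl fun j _ => ?_
    rw [Finset.sum_ite_eq (Finset.univ.filter (fun a => f a = i)) ((cyc j).1)
      (fun _ => sg (cyc j).2)]
    simp [Finset.mem_filter]
  have hcons : ∀ i, excess src tgt b x' i = excess src tgt b x i := by
    intro i
    unfold excess
    have e1 : ∀ (f : A → V), ∑ a ∈ Finset.univ.filter (fun a => f a = i), x' a
        = (∑ a ∈ Finset.univ.filter (fun a => f a = i), x a)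
          + δ * ∑ j : Fin k, (if f ((cyc j).1) = i then sg (cyc j).2 else 0) := by
      intro f
      rw [← hsum f i, Finset.mul_sum, ← Finset.sum_add_distrib]
    rw [e1 tgt, e1 src]
    have e2 : (∑ j : Fin k, (if tgt ((cyc j).1) = i then sg (cyc j).2 else 0))
        - (∑ j : Fin k, (if src ((cyc j).1) = i then sg (cyc j).2 else 0))
        = ∑ j : Fin k, ((if rtgt src tgt (cyc j) = i then (1:ℤ) else 0)
            - (if rsrc src tgt (cyc j) = i then 1 else 0)) := by
      rw [← Finset.sum_sub_distrib]
      refine Finset.sum_congr rfl fun j _ => ?_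
      rcases Bool.eq_false_or_eq_true (cyc j).2 with hb | hb <;>
        simp only [rsrc, rtgt, hb, hsgF, hsgT, if_true, if_false, Bool.false_eq_true] <;>
        split_ifs <;> ring
    have e3 := rot_sum hk (rsrc src tgt) (rtgt src tgt) cyc hcyc i
    rw [e3] at e2
    linear_combination δ * e2
  have hcd : ∑ a, c a * d a = S := by
    rw [hd, hS]
    dsimp only
    have : ∀ a : A, c a * ∑ j : Fin k, (if (cyc j).1 = a then sg (cyc j).2 else 0)
        = ∑ j : Fin k, (if (cyc j).1 = a then c a * sg (cyc j).2 else 0) := by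
      intro a; rw [Finset.mul_sum]; exact Finset.sum_congr rfl fun j _ => by split_ifs <;> ring
    rw [Finset.sum_congr rfl fun a _ => this a, Finset.sum_comm]
    refine Finset.sum_congr rfl fun j _ => ?_
    rw [Finset.sum_ite_eq Finset.univ ((cyc j).1) (fun a => c a * sg (cyc j).2)]
    simp only [Finset.mem_univ, if_true]
    rcases Bool.eq_false_or_eq_true (cyc j).2 with hb | hb <;>
      simp [rcost, hb, hsgT, hsgF]
  have hcost : flowCost c x' = flowCost c x + δ * S := by
    unfold flowCost
    rw [hx']
    dsimp only
    rw [← hcd, Finset.mul_sum, ← Finset.sum_add_distrib]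
    exact Finset.sum_congr rfl fun a _ => by ring
  have hδS : δ * S ≤ 0 := by
    rw [hδ]; split
    · exact mul_nonpos_of_nonneg_of_nonpos (le_of_lt hinfP) (by assumption)
    · rename_i h; push_neg at h
      exact mul_nonpos_of_nonpos_of_nonneg (by omega) (le_of_lt h)
  refine ⟨x', ⟨hpseudo, fun i => by rw [hcons i]; exact hx.2 i⟩, by omega, ?_, ?_⟩
  · intro a ha'
    by_cases ha : ∃ j, (cyc j).1 = a
    · obtain ⟨j, rfl⟩ := ha; exact hfree j
    · push_neg at ha; rwa [hxoth a ha] at ha'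
  · by_cases hS0 : S ≤ 0
    · obtain ⟨j0, -, hj0⟩ := Finset.exists_mem_eq_inf' hne slackP
      refine ⟨(cyc j0).1, hfree j0, ?_⟩
      have hv := hximg j0
      rw [hδ, if_pos hS0, hj0] at hv
      rcases Bool.eq_false_or_eq_true (cyc j0).2 with hb | hb
      · rw [hslackPT j0 hb] at hv; rw [hb, hsgT, mul_one] at hv; omega
      · rw [hslackPF j0 hb] at hv; rw [hb, hsgF, mul_neg_one] at hv; omega
    · obtain ⟨j0, -, hj0⟩ := Finset.exists_mem_eq_inf' hne slackM
      refine ⟨(cyc j0).1, hfree j0, ?_⟩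
      have hv := hximg j0
      rw [hδ, if_neg hS0, hj0] at hv
      rcases Bool.eq_false_or_eq_true (cyc j0).2 with hb | hb
      · rw [hslackMT j0 hb] at hv; rw [hb, hsgT, mul_one] at hv
        have hf := hfree j0; omega
      · rw [hslackMF j0 hb] at hv; rw [hb, hsgF, mul_neg_one] at hv
        have hf := hfree j0; omega
lemma edge_eq_of_adj [DecidableEq V] (src tgt : A → V) (F : Finset A) {u v : V}
    (h : (underlying src tgt F).Adj u v) :
    ∃ q : A × Bool, q.1 ∈ F ∧ rsrc src tgt q = u ∧ rtgt src tgt q = v ∧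
      s(src q.1, tgt q.1) = s(u, v) := by
  obtain ⟨hne, a, haF, hor⟩ := h
  rcases hor with ⟨h1, h2⟩ | ⟨h1, h2⟩
  · exact ⟨(a, true), haF, h1, h2, by rw [h1, h2]⟩
  · exact ⟨(a, false), haF, h2, h1, by rw [h1, h2, Sym2.eq_swap]⟩

lemma exists_arc_cycle_of_walk [DecidableEq V] [DecidableEq A] (src tgt : A → V) (F : Finset A)
    {v : V} (p : (underlying src tgt F).Walk v v) (hp : p.IsCycle) :
    ∃ (k : ℕ) (hk : 0 < k) (cyc : Fin k → A × Bool),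
      IsCycle (rsrc src tgt) (rtgt src tgt) hk cyc ∧
      Function.Injective (fun j => (cyc j).1) ∧ ∀ j, (cyc j).1 ∈ F := by
  classical
  have hlen : 0 < p.darts.length := by
    rw [p.length_darts]
    have := hp.three_le_length
    omega
  have hchoice : ∀ D : (underlying src tgt F).Dart, ∃ q : A × Bool, q.1 ∈ F ∧
      rsrc src tgt q = D.fst ∧ rtgt src tgt q = D.snd ∧ s(src q.1, tgt q.1) = D.edge := by
    intro D
    obtain ⟨q, h1, h2, h3, h4⟩ := edge_eq_of_adj src tgt F D.adj
    exact ⟨q, h1, h2, h3, h4⟩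
  choose f hf1 hf2 hf3 hf4 using hchoice
  refine ⟨p.darts.length, hlen, fun j => f (p.darts.get j), ?_, ?_, fun j => hf1 _⟩
  · -- cycle property
    intro i
    rw [hf3, hf2]
    rcases Nat.lt_or_ge (i.1 + 1) p.darts.length with hi | hi
    · have hmod : ((i.1 + 1) % p.darts.length) = i.1 + 1 := Nat.mod_eq_of_lt hi
      have hchain := List.isChain_iff_getElem.mp p.isChain_dartAdj_darts i.1 (by omega)
      have heq : (⟨(i.1 + 1) % p.darts.length, Nat.mod_lt _ hlen⟩ : Fin p.darts.length)
          = ⟨i.1 + 1, hi⟩ := by ext; exact hmod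
      rw [heq]
      exact hchain
    · have hieq : i.1 = p.darts.length - 1 := by omega
      have hmod : ((i.1 + 1) % p.darts.length) = 0 := by
        rw [hieq, Nat.sub_add_cancel hlen, Nat.mod_self]
      have h0 : (⟨(i.1 + 1) % p.darts.length, Nat.mod_lt _ hlen⟩ : Fin p.darts.length)
          = ⟨0, hlen⟩ := by ext; exact hmod
      rw [h0]
      have hlast : (p.darts.get i).snd = v := by
        have heq : p.darts.get i = p.darts.getLast (List.ne_nil_of_length_pos hlen) := by
          rw [List.getLast_eq_getElem, List.get_eq_getElem]
          congr 1
        rw [heq]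
        rw [p.getLast_darts_eq_lastDart]; simp [SimpleGraph.Walk.lastDart]
      have hhead : (p.darts.get ⟨0, hlen⟩).fst = v := by
        have heq : p.darts.get ⟨0, hlen⟩ = p.darts.head (List.ne_nil_of_length_pos hlen) := by
          rw [List.head_eq_getElem_zero, List.get_eq_getElem]
        rw [heq]
        rw [p.head_darts_eq_firstDart]; simp [SimpleGraph.Walk.firstDart]
      rw [hlast, hhead]
  · -- injectivity
    intro j j' hjj'
    dsimp only at hjj'
    have hedge : (p.darts.get j).edge = (p.darts.get j').edge := by
      rw [← hf4 (p.darts.get j), ← hf4 (p.darts.get j'), hjj']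
    have hnodup : p.edges.Nodup := hp.edges_nodup
    have hjlt : (j : ℕ) < p.edges.length := by rw [p.length_edges, ← p.length_darts]; exact j.2
    have hjlt' : (j' : ℕ) < p.edges.length := by rw [p.length_edges, ← p.length_darts]; exact j'.2
    have hmap : ∀ (m : Fin p.darts.length) (hm : (m : ℕ) < p.edges.length),
        p.edges.get ⟨m.1, hm⟩ = (p.darts.get m).edge := by
      intro m hm
      simp [SimpleGraph.Walk.edges, List.getElem_map]
    have h2 : p.edges.get ⟨j.1, hjlt⟩ = p.edges.get ⟨j'.1, hjlt'⟩ := by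
      rw [hmap j hjlt, hmap j' hjlt']; exact hedge
    have h3 := List.nodup_iff_injective_get.mp hnodup h2
    ext
    simpa using congrArg Fin.val h3
lemma exists_cycle_of_not_good [DecidableEq V] [DecidableEq A] (src tgt : A → V) (F : Finset A)
    (h : ¬((∀ a ∈ F, src a ≠ tgt a) ∧
        (∀ a ∈ F, ∀ a' ∈ F, s(src a, tgt a) = s(src a', tgt a') → a = a') ∧
        (underlying src tgt F).IsAcyclic)) :
    ∃ (k : ℕ) (hk : 0 < k) (cyc : Fin k → A × Bool),
      IsCycle (rsrc src tgt) (rtgt src tgt) hk cyc ∧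
      Function.Injective (fun j => (cyc j).1) ∧ ∀ j, (cyc j).1 ∈ F := by
  by_cases h1 : ∀ a ∈ F, src a ≠ tgt a
  · by_cases h2 : ∀ a ∈ F, ∀ a' ∈ F, s(src a, tgt a) = s(src a', tgt a') → a = a'
    · by_cases h3 : (underlying src tgt F).IsAcyclic
      · exact absurd ⟨h1, h2, h3⟩ h
      · simp only [SimpleGraph.IsAcyclic, not_forall, not_not] at h3
        obtain ⟨v, q, hq⟩ := h3
        exact exists_arc_cycle_of_walk src tgt F q hq
    · push_neg at h2
      obtain ⟨a, haF, a', ha'F, hedge, hne⟩ := h2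
      rw [Sym2.eq_iff] at hedge
      rcases hedge with ⟨e1, e2⟩ | ⟨e1, e2⟩
      · -- parallel: src a = src a', tgt a = tgt a'
        refine ⟨2, by norm_num, fun j => if j.1 = 0 then (a, true) else (a', false), ?_, ?_, ?_⟩
        · intro i
          rcases i with ⟨i, hi⟩
          interval_cases i <;>
            simp only [rsrc, rtgt, Nat.reduceMod, if_true, if_false, one_ne_zero,
              Nat.zero_ne_one] <;> simp [e1, e2]
        · intro j j' hjj'
          rcases j with ⟨j, hj⟩; rcases j' with ⟨j', hj'⟩
          dsimp only at hjj'
          interval_cases j <;> interval_cases j' <;> simp_all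
        · intro j
          rcases j with ⟨j, hj⟩
          interval_cases j <;> simp [haF, ha'F]
      · -- antiparallel: src a = tgt a', tgt a = src a'
        refine ⟨2, by norm_num, fun j => if j.1 = 0 then (a, true) else (a', true), ?_, ?_, ?_⟩
        · intro i
          rcases i with ⟨i, hi⟩
          interval_cases i <;>
            simp only [rsrc, rtgt, Nat.reduceMod, if_true, if_false, one_ne_zero,
              Nat.zero_ne_one] <;> simp [e1, e2]
        · intro j j' hjj'
          rcases j with ⟨j, hj⟩; rcases j' with ⟨j', hj'⟩
          dsimp only at hjj'
          interval_cases j <;> interval_cases j' <;> simp_all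
        · intro j
          rcases j with ⟨j, hj⟩
          interval_cases j <;> simp [haF, ha'F]
  · push_neg at h1
    obtain ⟨a, haF, haeq⟩ := h1
    refine ⟨1, one_pos, fun _ => (a, true), ?_, ?_, fun _ => haF⟩
    · intro i
      show rtgt src tgt (a, true) = rsrc src tgt (a, true)
      simp [rsrc, rtgt, haeq]
    · intro i j _
      exact Subsingleton.elim i j
lemma underlying_mono (src tgt : A → V) {T T' : Finset A} (h : T ⊆ T') :
    underlying src tgt T ≤ underlying src tgt T' := by
  rintro u w ⟨hne, a, haT, hor⟩
  exact ⟨hne, a, h haT, hor⟩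

lemma reachable_of_adj_reachable {G H : SimpleGraph V}
    (h : ∀ u w, G.Adj u w → H.Reachable u w) {u w : V} (huw : G.Reachable u w) :
    H.Reachable u w := by
  obtain ⟨p⟩ := huw
  induction p with
  | nil => exact SimpleGraph.Reachable.refl _
  | cons hadj _ ih => exact (h _ _ hadj).trans ih

lemma exists_tree [Fintype V] [Fintype A] [DecidableEq V] [DecidableEq A] (src tgt : A → V)
    (hconn : (underlying src tgt (Finset.univ : Finset A)).Connected)
    (F : Finset A)
    (hloop : ∀ a ∈ F, src a ≠ tgt a)
    (hinj : ∀ a ∈ F, ∀ a' ∈ F, s(src a, tgt a) = s(src a', tgt a') → a = a')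
    (hacyc : (underlying src tgt F).IsAcyclic) :
    ∃ T : Finset A, F ⊆ T ∧ (underlying src tgt T).Connected ∧
      T.card = Fintype.card V - 1 := by
  classical
  set P : Finset A → Prop := fun T => F ⊆ T ∧ (∀ a ∈ T, src a ≠ tgt a) ∧
    (∀ a ∈ T, ∀ a' ∈ T, s(src a, tgt a) = s(src a', tgt a') → a = a') ∧
    (underlying src tgt T).IsAcyclic with hP
  have hsne : ((Finset.univ : Finset A).powerset.filter P).Nonempty := by
    refine ⟨F, Finset.mem_filter.mpr ⟨Finset.mem_powerset.mpr (Finset.subset_univ F), ?_⟩⟩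
    exact ⟨Finset.Subset.refl F, hloop, hinj, hacyc⟩
  obtain ⟨T, hTmem, hTmax⟩ := Finset.exists_max_image _ Finset.card hsne
  obtain ⟨-, hFT, hTloop, hTinj, hTacyc⟩ :
      T ∈ (Finset.univ : Finset A).powerset ∧ F ⊆ T ∧ (∀ a ∈ T, src a ≠ tgt a) ∧
      (∀ a ∈ T, ∀ a' ∈ T, s(src a, tgt a) = s(src a', tgt a') → a = a') ∧
      (underlying src tgt T).IsAcyclic := by
    have := Finset.mem_filter.mp hTmem
    exact ⟨this.1, this.2.1, this.2.2.1, this.2.2.2.1, this.2.2.2.2⟩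
  -- every arc's endpoints are connected in T
  have hreach : ∀ a : A, (underlying src tgt T).Reachable (src a) (tgt a) := by
    by_contra hcon
    push_neg at hcon
    obtain ⟨a, ha⟩ := hcon
    have hane : src a ≠ tgt a := by
      intro heq; exact ha (by rw [heq])
    have haT : a ∉ T := by
      intro haT
      exact ha (SimpleGraph.Adj.reachable ⟨hane, a, haT, Or.inl ⟨rfl, rfl⟩⟩)
    set T' := insert a T with hT'
    have hedge_new : ∀ b ∈ T, s(src b, tgt b) ≠ s(src a, tgt a) := by
      intro b hbT heq
      rw [Sym2.eq_iff] at heq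
      rcases heq with ⟨e1, e2⟩ | ⟨e1, e2⟩
      · exact ha (SimpleGraph.Adj.reachable ⟨hane, b, hbT, Or.inl ⟨e1, e2⟩⟩)
      · exact ha (SimpleGraph.Adj.reachable ⟨hane, b, hbT, Or.inr ⟨e1, e2⟩⟩)
    -- the graph on T' minus the new edge is contained in the graph on T
    have hdel : (underlying src tgt T' \ SimpleGraph.fromEdgeSet {s(src a, tgt a)})
        ≤ underlying src tgt T := by
      rintro u w ⟨⟨hne, b, hbT', hor⟩, hnadj⟩
      rcases Finset.mem_insert.mp hbT' with rfl | hbT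
      · exfalso
        apply hnadj
        rw [SimpleGraph.fromEdgeSet_adj]
        refine ⟨?_, hne⟩
        rcases hor with ⟨e1, e2⟩ | ⟨e1, e2⟩
        · rw [e1, e2]; exact rfl
        · rw [e1, e2]; exact Sym2.eq_swap ▸ rfl
      · exact ⟨hne, b, hbT, hor⟩
    have hT'acyc : (underlying src tgt T').IsAcyclic := by
      intro u q hq
      by_cases he : s(src a, tgt a) ∈ q.edges
      · have := SimpleGraph.adj_and_reachable_delete_edges_iff_exists_cycle.mpr ⟨u, q, hq, he⟩
        exact ha (this.2.mono hdel)
      · have hsub : ∀ e ∈ q.edges, e ∈ (underlying src tgt T).edgeSet := by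
          intro e heq
          induction e with
          | h u' w' =>
            have hadj : (underlying src tgt T').Adj u' w' := q.adj_of_mem_edges heq
            obtain ⟨hne, b, hbT', hor⟩ := hadj
            rcases Finset.mem_insert.mp hbT' with rfl | hbT
            · exfalso
              apply he
              rcases hor with ⟨e1, e2⟩ | ⟨e1, e2⟩
              · rw [← e1, ← e2] at heq; exact heq
              · rw [← e1, ← e2, Sym2.eq_swap] at heq; exact heq
            · exact ⟨hne, b, hbT, hor⟩
        exact hTacyc (q.transfer _ hsub) (hq.transfer hsub)
    have hT'P : P T' := by
      refine ⟨hFT.trans (Finset.subset_insert a T), ?_, ?_, hT'acyc⟩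
      · intro b hbT'
        rcases Finset.mem_insert.mp hbT' with rfl | hbT
        · exact hane
        · exact hTloop b hbT
      · intro b hbT' b' hb'T' heq
        rcases Finset.mem_insert.mp hbT' with rfl | hbT <;>
          rcases Finset.mem_insert.mp hb'T' with rfl | hb'T
        · rfl
        · exact absurd heq.symm (hedge_new b' hb'T)
        · exact absurd heq (hedge_new b hbT)
        · exact hTinj b hbT b' hb'T heq
    have hT'mem : T' ∈ (Finset.univ : Finset A).powerset.filter P :=
      Finset.mem_filter.mpr ⟨Finset.mem_powerset.mpr (Finset.subset_univ _), hT'P⟩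
    have := hTmax T' hT'mem
    rw [Finset.card_insert_of_notMem haT] at this
    omega
  -- connectivity of T's underlying graph
  have hVne : Nonempty V := hconn.nonempty
  have hTconn : (underlying src tgt T).Connected := by
    rw [SimpleGraph.connected_iff]
    refine ⟨fun u w => ?_, hVne⟩
    refine reachable_of_adj_reachable ?_ (hconn.preconnected u w)
    rintro u' w' ⟨hne, a, -, hor⟩
    rcases hor with ⟨e1, e2⟩ | ⟨e1, e2⟩
    · rw [← e1, ← e2]; exact hreach a
    · rw [← e1, ← e2]; exact (hreach a).symm
  -- cardinality
  haveI : Fintype (underlying src tgt T).edgeSet := Set.Finite.fintype (Set.toFinite _)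
  have htree : (underlying src tgt T).IsTree := ⟨hTconn, hTacyc⟩
  have hcardE := htree.card_edgeFinset
  have hcardT : T.card = (underlying src tgt T).edgeFinset.card := by
    refine Finset.card_bij (fun a _ => s(src a, tgt a)) ?_ ?_ ?_
    · intro a haT
      rw [SimpleGraph.mem_edgeFinset, SimpleGraph.mem_edgeSet]
      exact ⟨hTloop a haT, a, haT, Or.inl ⟨rfl, rfl⟩⟩
    · intro a haT a' ha'T heq
      exact hTinj a haT a' ha'T heq
    · intro e hemem
      rw [SimpleGraph.mem_edgeFinset] at hemem
      induction e with
      | h u' w' =>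
        rw [SimpleGraph.mem_edgeSet] at hemem
        obtain ⟨hne, a, haT, hor⟩ := hemem
        refine ⟨a, haT, ?_⟩
        show s(src a, tgt a) = s(u', w')
        rcases hor with ⟨e1, e2⟩ | ⟨e1, e2⟩
        · rw [e1, e2]
        · rw [e1, e2]; exact Sym2.eq_swap
  exact ⟨T, hFT, hTconn, by omega⟩

lemma good_case [Fintype V] [Fintype A] [DecidableEq V] [DecidableEq A]
    (src tgt : A → V) (b : V → ℤ) (cap c : A → ℤ) (y : A → ℤ)
    (hconn : (underlying src tgt (Finset.univ : Finset A)).Connected)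
    (hy : IsFeasible src tgt b cap y)
    (h1 : ∀ a ∈ Finset.univ.filter (fun a => 0 < y a ∧ y a < cap a), src a ≠ tgt a)
    (h2 : ∀ a ∈ Finset.univ.filter (fun a => 0 < y a ∧ y a < cap a),
        ∀ a' ∈ Finset.univ.filter (fun a => 0 < y a ∧ y a < cap a),
        s(src a, tgt a) = s(src a', tgt a') → a = a')
    (h3 : (underlying src tgt (Finset.univ.filter (fun a => 0 < y a ∧ y a < cap a))).IsAcyclic) :
    ∃ (x' : A → ℤ) (T L U : Finset A),
      IsFeasible src tgt b cap x' ∧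
      Disjoint T L ∧ Disjoint T U ∧ Disjoint L U ∧
      T ∪ L ∪ U = Finset.univ ∧
      (underlying src tgt T).Connected ∧ T.card = Fintype.card V - 1 ∧
      (∀ a ∈ L, x' a = 0) ∧ (∀ a ∈ U, x' a = cap a) ∧
      flowCost c x' ≤ flowCost c y := by
  classical
  set F := Finset.univ.filter (fun a => 0 < y a ∧ y a < cap a) with hF
  obtain ⟨T, hFT, hTconn, hTcard⟩ := exists_tree src tgt hconn F h1 h2 h3
  set L := (Finset.univ \ T).filter (fun a => y a = 0) with hL
  set U := (Finset.univ \ T) \ L with hU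
  refine ⟨y, T, L, U, hy, ?_, ?_, ?_, ?_, hTconn, hTcard, ?_, ?_, le_refl _⟩
  · rw [Finset.disjoint_left]
    intro a haT haL
    have := Finset.mem_sdiff.mp (Finset.filter_subset _ _ haL)
    exact this.2 haT
  · rw [Finset.disjoint_left]
    intro a haT haU
    have := Finset.mem_sdiff.mp (Finset.mem_sdiff.mp haU).1
    exact this.2 haT
  · exact Finset.disjoint_sdiff
  · rw [Finset.union_assoc, hU,
      Finset.union_sdiff_of_subset (Finset.filter_subset _ _),
      Finset.union_sdiff_of_subset (Finset.subset_univ T)]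
  · intro a haL
    exact (Finset.mem_filter.mp haL).2
  · intro a haU
    have h4 := Finset.mem_sdiff.mp haU
    have h5 := Finset.mem_sdiff.mp h4.1
    have hnF : a ∉ F := fun haF => h5.2 (hFT haF)
    have hnfree : ¬(0 < y a ∧ y a < cap a) := by
      intro hc
      exact hnF (Finset.mem_filter.mpr ⟨Finset.mem_univ a, hc⟩)
    have hps := hy.1 a
    have hnz : ¬(y a = 0) := by
      intro hz
      exact h4.2 (Finset.mem_filter.mpr ⟨h4.1, hz⟩)
    omega


/-- any feasible flow can be transformed into a spanning tree
solution of total cost no greater than that of the original flow. -/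
theorem feasible_to_spanning_tree_solution
    [Fintype V] [Fintype A] [DecidableEq V] [DecidableEq A]
    (src tgt : A → V) (b : V → ℤ) (cap c : A → ℤ) (x : A → ℤ)
    (hconn : (underlying src tgt (Finset.univ : Finset A)).Connected)
    (hcap : ∀ a, 0 ≤ cap a)
    (hx : IsFeasible src tgt b cap x) :
    ∃ (x' : A → ℤ) (T L U : Finset A),
      IsFeasible src tgt b cap x' ∧
      Disjoint T L ∧ Disjoint T U ∧ Disjoint L U ∧
      T ∪ L ∪ U = Finset.univ ∧
      (underlying src tgt T).Connected ∧ T.card = Fintype.card V - 1 ∧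
      (∀ a ∈ L, x' a = 0) ∧ (∀ a ∈ U, x' a = cap a) ∧
      flowCost c x' ≤ flowCost c x := by
  
  classical
  suffices H : ∀ (n : ℕ) (y : A → ℤ), IsFeasible src tgt b cap y →
      (Finset.univ.filter (fun a => 0 < y a ∧ y a < cap a)).card ≤ n →
      ∃ (x' : A → ℤ) (T L U : Finset A),
        IsFeasible src tgt b cap x' ∧
        Disjoint T L ∧ Disjoint T U ∧ Disjoint L U ∧
        T ∪ L ∪ U = Finset.univ ∧
        (underlying src tgt T).Connected ∧ T.card = Fintype.card V - 1 ∧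
        (∀ a ∈ L, x' a = 0) ∧ (∀ a ∈ U, x' a = cap a) ∧
        flowCost c x' ≤ flowCost c y by
    exact H _ x hx le_rfl
  intro n
  induction n with
  | zero =>
    intro y hy hcard
    have hFempty : Finset.univ.filter (fun a => 0 < y a ∧ y a < cap a) = ∅ :=
      Finset.card_eq_zero.mp (Nat.le_zero.mp hcard)
    refine good_case src tgt b cap c y hconn hy ?_ ?_ ?_
    · intro a ha; rw [hFempty] at ha; exact absurd ha (Finset.notMem_empty a)
    · intro a ha; rw [hFempty] at ha; exact absurd ha (Finset.notMem_empty a)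
    · have hbot : underlying src tgt (Finset.univ.filter (fun a => 0 < y a ∧ y a < cap a)) = ⊥ := by
        ext u w
        simp only [underlying, hFempty, SimpleGraph.bot_adj, iff_false, not_and]
        rintro - ⟨a, ha, -⟩
        exact absurd ha (Finset.notMem_empty a)
      rw [hbot]
      exact SimpleGraph.isAcyclic_bot
  | succ n ih =>
    intro y hy hcard
    by_cases hgood : (∀ a ∈ Finset.univ.filter (fun a => 0 < y a ∧ y a < cap a), src a ≠ tgt a) ∧
        (∀ a ∈ Finset.univ.filter (fun a => 0 < y a ∧ y a < cap a),
          ∀ a' ∈ Finset.univ.filter (fun a => 0 < y a ∧ y a < cap a),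
          s(src a, tgt a) = s(src a', tgt a') → a = a') ∧
        (underlying src tgt (Finset.univ.filter (fun a => 0 < y a ∧ y a < cap a))).IsAcyclic
    · exact good_case src tgt b cap c y hconn hy hgood.1 hgood.2.1 hgood.2.2
    · obtain ⟨k, hk, cyc, hcyc, hinj, hmem⟩ :=
        exists_cycle_of_not_good src tgt (Finset.univ.filter (fun a => 0 < y a ∧ y a < cap a))
          hgood
      have hfree : ∀ j, 0 < y (cyc j).1 ∧ y (cyc j).1 < cap (cyc j).1 := by
        intro j
        exact (Finset.mem_filter.mp (hmem j)).2
      obtain ⟨y', hy', hcost', hsub, a0, ha0, ha0'⟩ :=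
        cancel_cycle src tgt b cap c y hy hk cyc hcyc hinj hfree
      have hssub : Finset.univ.filter (fun a => 0 < y' a ∧ y' a < cap a)
          ⊂ Finset.univ.filter (fun a => 0 < y a ∧ y a < cap a) := by
        constructor
        · intro a ha
          have := (Finset.mem_filter.mp ha).2
          exact Finset.mem_filter.mpr ⟨Finset.mem_univ a, hsub a this⟩
        · intro hcon
          have : a0 ∈ Finset.univ.filter (fun a => 0 < y' a ∧ y' a < cap a) :=
            hcon (Finset.mem_filter.mpr ⟨Finset.mem_univ a0, ha0⟩)
          exact ha0' (Finset.mem_filter.mp this).2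
      have hcard' : (Finset.univ.filter (fun a => 0 < y' a ∧ y' a < cap a)).card ≤ n := by
        have := Finset.card_lt_card hssub
        omega
      obtain ⟨x', T, L, U, hfeas, d1, d2, d3, hun, hc, hcd, hL, hU, hco⟩ := ih y' hy' hcard'
      exact ⟨x', T, L, U, hfeas, d1, d2, d3, hun, hc, hcd, hL, hU, le_trans hco hcost'⟩
end
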